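/- arXiv:2407.02375 — 3 statements merged into one kernel-verified Lean document; each statement's English description precedes it below -/
import Mathlib

section
/- The Schubert polynomials (𝔖_w), indexed by all finitely supported permutations w of {1,2,…}, form a ℤ-basis of Poly = ℤ[x₁,x₂,…]; moreover, for each d ≥ 0, the subfamily {𝔖_w : Des(w) ⊆ {1,…,d}} is a ℤ-basis of the subring ℤ[x₁,…,x_d]. -/
/-
Conventions: `Pol = MvPolynomial ℕ ℤ` with the Lean variable `X i` representing
the paper's variable `x_{i+1}` (0-indexed).  All operators carrying a paper index
`i ≥ 1` are represented by Lean operators indexed by `i : ℕ` (Lean `i` ↔ paper `i+1`),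
and sequences of positive integers are represented by sequences of natural numbers
(entry `v` ↔ paper entry `v+1`).
-/

open MvPolynomial
open scoped Classical

abbrev Pol := MvPolynomial ℕ ℤ

noncomputable section

/-- Interchange the variables `x_{i+1}` and `x_{i+2}` (paper indexing). -/
def swapVar (i : ℕ) (f : Pol) : Pol := rename (Equiv.swap i (i+1)) f

/-- Exact division: the unique `g` with `d * g = f` when it exists (`0` otherwise). -/
def exactDiv (d f : Pol) : Pol := if h : ∃ g : Pol, d * g = f then h.choose else 0

/-- The divided difference operator `∂_{i+1}` (paper indexing). -/
def ddiff (i : ℕ) (f : Pol) : Pol := exactDiv (X i - X (i+1)) (f - swapVar i f)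

/-- The Bergeron–Sottile operator `R_{i+1}` (paper indexing): `x_j ↦ x_j` for
`j < i+1`, `x_{i+1} ↦ 0`, `x_j ↦ x_{j-1}` for `j > i+1`. -/
def BS (i : ℕ) : Pol →ₐ[ℤ] Pol :=
  aeval fun j => if j < i then X j else if j = i then 0 else X (j-1)

/-- `m`-fold iterate of `BS i`. -/
def BSit (i m : ℕ) (f : Pol) : Pol := (fun g => BS i g)^[m] f

/-- `Z g = Σ_{k ≥ 0} R₁ᵏ g`. -/
def Zop (f : Pol) : Pol := ∑ᶠ k : ℕ, BSit 0 k f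

/-- `Z^{(m)} g = Σ_{k ≥ 0} R₁^{km} g`. -/
def Zm (m : ℕ) (f : Pol) : Pol := ∑ᶠ k : ℕ, BSit 0 (k * m) f

/-- The truncation operator keeping the first `n` variables: `Π_n` in paper indexing. -/
def truncOp (n : ℕ) : Pol →ₐ[ℤ] Pol := aeval fun j => if j < n then X j else 0

/-- The quasisymmetric divided difference `T_{i+1}` defined as the exact quotient
`((R_{i+2} - R_{i+1})f)/x_{i+1}` (paper indexing). -/
def TqDiv (i : ℕ) (f : Pol) : Pol := exactDiv (X i) (BS (i+1) f - BS i f)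

/-- The quasisymmetric divided difference `T_{i+1} = R_{i+1} ∘ ∂_{i+1}` (paper indexing). -/
def Tq (i : ℕ) (f : Pol) : Pol := BS i (ddiff i f)

/-- The `m`-quasisymmetric divided difference `T^{(m)}_{i+1}` (paper indexing). -/
def Tm (m i : ℕ) (f : Pol) : Pol := exactDiv (X i) (BSit (i+1) m f - BSit i m f)

/-- The slide extractor `D_{i+1} = Π_{i+1} ∘ ∂_{i+1}` (paper indexing). -/
def Dop (i : ℕ) (f : Pol) : Pol := truncOp (i+1) (ddiff i f)

/-- The `m`-slide extractor `D^{(m)}_{i+1} = Π_{i+1} ∘ T^{(m)}_{i+1}` (paper indexing). -/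
def Dm (m i : ℕ) (f : Pol) : Pol := truncOp (i+1) (Tm m i f)

/-- The slide creator `B_{i+1} f = Σ_{k=1}^{i+1} x_k · R_k^{i+1-k}(Π_{i+1} f)` (paper indexing). -/
def Bop (i : ℕ) (f : Pol) : Pol :=
  ∑ k ∈ Finset.range (i+1), X k * BSit k (i - k) (truncOp (i+1) f)

/-- The creation operator `Z ∘ x_{i+1} ∘ R_{i+1}` (paper indexing). -/
def crea (i : ℕ) (f : Pol) : Pol := Zop (X i * BS i f)

/-- A permutation of `{0,1,2,…}` is finitely supported if it fixes all but
finitely many points. -/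
def FinSupp (w : Equiv.Perm ℕ) : Prop := Set.Finite {x | w x ≠ x}

/-- Coxeter length: the minimal `k` such that `w` is a product of `k` simple
transpositions. -/
def len (w : Equiv.Perm ℕ) : ℕ :=
  sInf {k | ∃ l : List ℕ, l.length = k ∧ (l.map fun i => Equiv.swap i (i+1)).prod = w}

/-- The set of reduced words for `w`. -/
def Red (w : Equiv.Perm ℕ) : Set (List ℕ) :=
  {l | l.length = len w ∧ (l.map fun i => Equiv.swap i (i+1)).prod = w}

/-- A family of polynomials indexed by permutations is a family of Schubert
polynomials if: each member is homogeneous of degree the length, the identity is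
sent to `1`, and divided differences act as expected (all this for finitely
supported permutations). -/
def IsSchubertFamily (S : Equiv.Perm ℕ → Pol) : Prop :=
  (∀ w, FinSupp w → (S w).IsHomogeneous (len w)) ∧
  S 1 = 1 ∧
  ∀ w, FinSupp w → ∀ i : ℕ,
    ddiff i (S w) = if w (i+1) < w i then S (w * Equiv.swap i (i+1)) else 0

/-- `b` is a compatible sequence for `a`. -/
def Compat {k : ℕ} (a b : Fin k → ℕ) : Prop :=
  Monotone b ∧ (∀ j, b j ≤ a j) ∧
  ∀ (j : ℕ) (h : j + 1 < k),
    a ⟨j, Nat.lt_of_succ_lt h⟩ < a ⟨j+1, h⟩ → b ⟨j, Nat.lt_of_succ_lt h⟩ < b ⟨j+1, h⟩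

/-- The slide polynomial `𝔉_a`, as the sum of the monomials of all compatible
sequences for `a`. -/
def slide {k : ℕ} (a : Fin k → ℕ) : Pol :=
  ∑ᶠ b ∈ {b : Fin k → ℕ | Compat a b}, ∏ j, X (b j)

/-- `b` is an `m`-compatible sequence for `a` (entrywise congruent mod `m`). -/
def MCompat (m : ℕ) {k : ℕ} (a b : Fin k → ℕ) : Prop :=
  Monotone b ∧ (∀ j, b j ≤ a j ∧ b j % m = a j % m) ∧
  ∀ (j : ℕ) (h : j + 1 < k),
    a ⟨j, Nat.lt_of_succ_lt h⟩ < a ⟨j+1, h⟩ → b ⟨j, Nat.lt_of_succ_lt h⟩ < b ⟨j+1, h⟩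

/-- The `m`-slide polynomial `𝔉ᵐ_a`. -/
def mslide (m : ℕ) {k : ℕ} (a : Fin k → ℕ) : Pol :=
  ∑ᶠ b ∈ {b : Fin k → ℕ | MCompat m a b}, ∏ j, X (b j)

/-- Value of the `m`-slide creator `B^{(m)}_{a+1}` (paper indexing) on the monomial with
exponent vector `d`. -/
def BmMono (m a : ℕ) (d : ℕ →₀ ℕ) : Pol :=
  if ∃ t, a < t ∧ d t ≠ 0 then 0
  else monomial (d.erase a) 1 *
    ∑ r ∈ Finset.range (a+1),
      if r * m ≤ a ∧ ∀ t, t < a → d t ≠ 0 → t < a - r * m then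
        X (a - r * m) ^ (d a + 1) else 0

/-- The `m`-slide creator `B^{(m)}_{a+1}` (paper indexing), extended linearly from
its values on monomials. -/
def Bm (m a : ℕ) (f : Pol) : Pol := ∑ d ∈ f.support, C (f.coeff d) * BmMono m a d

end

noncomputable section SchubertDev

section Aux

lemma swapVar_C (i : ℕ) (a : ℤ) : swapVar i (C a) = C a := by simp [swapVar]

lemma swapVar_add (i : ℕ) (f g : Pol) : swapVar i (f + g) = swapVar i f + swapVar i g := by
  simp [swapVar]

lemma swapVar_mul (i : ℕ) (f g : Pol) : swapVar i (f * g) = swapVar i f * swapVar i g := by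
  simp [swapVar]

lemma swapVar_X (i n : ℕ) : swapVar i (X n) = X (Equiv.swap i (i+1) n) := by
  simp [swapVar]

lemma dvd_sub_swapVar (i : ℕ) (f : Pol) : (X i - X (i+1) : Pol) ∣ (f - swapVar i f) := by
  induction f using MvPolynomial.induction_on with
  | C a => simp [swapVar]
  | add p q hp hq =>
      have : p + q - swapVar i (p + q) = (p - swapVar i p) + (q - swapVar i q) := by
        rw [swapVar_add]; ring
      rw [this]; exact dvd_add hp hq
  | mul_X p n hp =>
      have : p * X n - swapVar i (p * X n)
          = (p - swapVar i p) * X n + swapVar i p * (X n - swapVar i (X n)) := by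
        rw [swapVar_mul]; ring
      rw [this]
      refine dvd_add (Dvd.dvd.mul_right hp _) (Dvd.dvd.mul_left ?_ _)
      rw [swapVar_X, Equiv.swap_apply_def]
      split_ifs with h1 h2
      · subst h1; exact dvd_refl _
      · exact ⟨-1, by subst h2; ring⟩
      · simp

lemma X_sub_X_ne (i : ℕ) : (X i - X (i+1) : Pol) ≠ 0 := by
  intro h
  have := congrArg (coeff (Finsupp.single i 1)) h
  rw [coeff_sub, coeff_X', coeff_X', if_pos rfl, if_neg (by
    intro hc
    have := congrArg (fun m => (m : ℕ →₀ ℕ) i) hc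
    simp [Finsupp.single_apply] at this), coeff_zero] at this
  norm_num at this

lemma ddiff_spec (i : ℕ) (f : Pol) :
    (X i - X (i+1) : Pol) * ddiff i f = f - swapVar i f := by
  unfold ddiff exactDiv
  obtain ⟨g, hg⟩ := dvd_sub_swapVar i f
  rw [dif_pos ⟨g, hg.symm⟩]
  exact (⟨g, hg.symm⟩ : ∃ g : Pol, _ * g = _).choose_spec

lemma ddiff_unique {i : ℕ} {f g : Pol} (h : (X i - X (i+1) : Pol) * g = f - swapVar i f) :
    ddiff i f = g :=
  mul_left_cancel₀ (X_sub_X_ne i) (by rw [ddiff_spec, h])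

lemma swapVar_eq_of_ddiff_eq_zero {i : ℕ} {f : Pol} (h : ddiff i f = 0) :
    swapVar i f = f := by
  have := ddiff_spec i f
  rw [h, mul_zero] at this
  exact (sub_eq_zero.mp this.symm).symm

end Aux


/-- `w` fixes every point `≥ N`. -/
def Bdd (w : Equiv.Perm ℕ) (N : ℕ) : Prop := ∀ k, N ≤ k → w k = k

lemma Bdd.finSupp {w : Equiv.Perm ℕ} {N : ℕ} (h : Bdd w N) : FinSupp w :=
  Set.Finite.subset (Set.finite_Iio N) (fun x hx => by
    by_contra hc
    exact hx (h x (not_lt.mp hc)))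

lemma FinSupp.exists_bdd {w : Equiv.Perm ℕ} (h : FinSupp w) : ∃ N, Bdd w N := by
  obtain ⟨M, hM⟩ := h.bddAbove
  exact ⟨M + 1, fun k hk => by
    by_contra hc
    have := hM (Set.mem_setOf.mpr hc : k ∈ {x | w x ≠ x})
    omega⟩

lemma Bdd.mono {w : Equiv.Perm ℕ} {N M : ℕ} (h : Bdd w N) (hNM : N ≤ M) : Bdd w M :=
  fun k hk => h k (le_trans hNM hk)

lemma Bdd.inv {w : Equiv.Perm ℕ} {N : ℕ} (h : Bdd w N) : Bdd w⁻¹ N := by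
  intro k hk
  have := h k hk
  conv_lhs => rw [← this]
  simp

lemma Bdd.lt {w : Equiv.Perm ℕ} {N : ℕ} (h : Bdd w N) {k : ℕ} (hk : k < N) : w k < N := by
  by_contra hc
  have h2 := h.inv (w k) (not_lt.mp hc)
  simp at h2
  omega

lemma Bdd.mul {u v : Equiv.Perm ℕ} {N : ℕ} (hu : Bdd u N) (hv : Bdd v N) :
    Bdd (u * v) N := fun k hk => by
  simp [Equiv.Perm.mul_apply, hv k hk, hu k hk]

lemma Bdd.swap (i N : ℕ) (h : i + 2 ≤ N) : Bdd (Equiv.swap i (i+1)) N := fun k hk => by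
  rw [Equiv.swap_apply_def]
  split_ifs <;> omega

lemma finSupp_one : FinSupp (1 : Equiv.Perm ℕ) := (Bdd.finSupp (N := 0) (fun k _ => rfl))

/-- canonical bound -/
noncomputable def bnd (w : Equiv.Perm ℕ) : ℕ :=
  if h : FinSupp w then sSup {x | w x ≠ x} + 1 else 0

lemma bnd_spec {w : Equiv.Perm ℕ} (h : FinSupp w) : Bdd w (bnd w) := by
  rw [bnd, dif_pos h]
  intro k hk
  by_contra hc
  have hbdd : BddAbove {x | w x ≠ x} := h.bddAbove
  have := le_csSup hbdd (Set.mem_setOf.mpr hc : k ∈ {x | w x ≠ x})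
  omega

/-- inversion set of `w` truncated to `[0,N)²`. -/
def invF (w : Equiv.Perm ℕ) (N : ℕ) : Finset (ℕ × ℕ) :=
  (Finset.range N ×ˢ Finset.range N).filter fun p => p.1 < p.2 ∧ w p.2 < w p.1

lemma mem_invF {w : Equiv.Perm ℕ} {N : ℕ} {p : ℕ × ℕ} :
    p ∈ invF w N ↔ p.1 < N ∧ p.2 < N ∧ p.1 < p.2 ∧ w p.2 < w p.1 := by
  simp [invF, Finset.mem_filter, and_assoc]

lemma invF_eq_of_bdd {w : Equiv.Perm ℕ} {N M : ℕ} (h : Bdd w N) (hNM : N ≤ M) :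
    invF w M = invF w N := by
  ext p
  simp only [mem_invF]
  constructor
  · rintro ⟨h1, h2, h3, h4⟩
    refine ⟨?_, ?_, h3, h4⟩ <;> by_contra hc <;> push_neg at hc
    · rw [h p.1 hc] at h4
      rcases lt_or_ge p.2 N with h5 | h5
      · exact absurd (h.lt h5) (by omega)
      · rw [h p.2 h5] at h4; omega
    · rw [h p.2 hc] at h4
      rcases lt_or_ge p.1 N with h5 | h5
      · exact absurd (h.lt h5) (by omega)
      · rw [h p.1 h5] at h4; omega
  · rintro ⟨h1, h2, h3, h4⟩
    exact ⟨by omega, by omega, h3, h4⟩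

/-- number of inversions -/
noncomputable def inv (w : Equiv.Perm ℕ) : ℕ := (invF w (bnd w)).card

lemma inv_eq_card {w : Equiv.Perm ℕ} {N : ℕ} (h : Bdd w N) :
    inv w = (invF w N).card := by
  have hb := bnd_spec h.finSupp
  have h1 := invF_eq_of_bdd hb (le_max_left (bnd w) N)
  have h2 := invF_eq_of_bdd h (le_max_right (bnd w) N)
  rw [inv, ← h1, h2]


section Toggle

variable {w : Equiv.Perm ℕ} {N i : ℕ}

lemma swap_lt_swap {i a b : ℕ} (hab : a < b) (hne : ¬(a = i ∧ b = i + 1)) :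
    Equiv.swap i (i+1) a < Equiv.swap i (i+1) b := by
  rw [Equiv.swap_apply_def, Equiv.swap_apply_def]
  split_ifs <;> omega


lemma swap_lt_N {i N a : ℕ} (h : i + 1 < N) (ha : a < N) :
    Equiv.swap i (i+1) a < N := by
  rw [Equiv.swap_apply_def]; split_ifs <;> omega

lemma swap_pair_ne {i : ℕ} {p : ℕ × ℕ} (h3 : p.1 < p.2) :
    ((Equiv.swap i (i+1)) p.1, (Equiv.swap i (i+1)) p.2) ≠ (i, i+1) := by
  intro hc
  rw [Prod.ext_iff] at hc
  obtain ⟨h1, h2⟩ := hc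
  simp only at h1 h2
  have e1 : p.1 = i + 1 := by
    have := congrArg (Equiv.swap i (i+1)) h1
    rwa [Equiv.swap_apply_self, Equiv.swap_apply_left] at this
  have e2 : p.2 = i := by
    have := congrArg (Equiv.swap i (i+1)) h2
    rwa [Equiv.swap_apply_self, Equiv.swap_apply_right] at this
  omega

lemma invF_erase_card (hN : Bdd w N) (hiN : i + 1 < N) :
    ((invF (w * Equiv.swap i (i+1)) N).erase (i, i+1)).card
      = ((invF w N).erase (i, i+1)).card := by
  set s := Equiv.swap i (i+1) with hs
  apply Finset.card_bij' (fun p _ => (s p.1, s p.2)) (fun p _ => (s p.1, s p.2))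
  · intro p hp
    rw [Finset.mem_erase, mem_invF] at hp ⊢
    obtain ⟨hne, h1, h2, h3, h4⟩ := hp
    have hne' : ¬(p.1 = i ∧ p.2 = i + 1) := by
      intro ⟨ha, hb⟩; exact hne (by simp [Prod.ext_iff, ha, hb])
    have hlt := swap_lt_swap h3 hne'
    refine ⟨swap_pair_ne h3, swap_lt_N (by omega) h1, swap_lt_N (by omega) h2, hlt, ?_⟩
    · have e1 : w (s p.2) = (w * s) p.2 := rfl
      have e2 : w (s p.1) = (w * s) p.1 := rfl
      rw [e1, e2]; exact h4
  · intro p hp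
    rw [Finset.mem_erase, mem_invF] at hp ⊢
    obtain ⟨hne, h1, h2, h3, h4⟩ := hp
    have hne' : ¬(p.1 = i ∧ p.2 = i + 1) := by
      intro ⟨ha, hb⟩; exact hne (by simp [Prod.ext_iff, ha, hb])
    have hlt := swap_lt_swap h3 hne'
    refine ⟨swap_pair_ne h3, swap_lt_N (by omega) h1, swap_lt_N (by omega) h2, hlt, ?_⟩
    · have e1 : (w * s) (s p.2) = w p.2 := by
        simp [Equiv.Perm.mul_apply, hs]
      have e2 : (w * s) (s p.1) = w p.1 := by
        simp [Equiv.Perm.mul_apply, hs]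
      rw [e1, e2]; exact h4
  · intro p _; simp [hs]
  · intro p _; simp [hs]

lemma descent_toggle (hN : Bdd w N) (hiN : i + 1 < N) (hd : w (i+1) < w i) :
    (invF (w * Equiv.swap i (i+1)) N).card + 1 = (invF w N).card := by
  have hmem : (i, i+1) ∈ invF w N := by
    rw [mem_invF]; exact ⟨by omega, hiN, by omega, hd⟩
  have hnmem : (i, i+1) ∉ invF (w * Equiv.swap i (i+1)) N := by
    rw [mem_invF]
    push_neg
    intro _ _ _
    simp only [Equiv.Perm.mul_apply, Equiv.swap_apply_left, Equiv.swap_apply_right]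
    exact le_of_lt hd
  have h1 := invF_erase_card hN hiN
  rw [Finset.erase_eq_of_notMem hnmem] at h1
  rw [h1, Finset.card_erase_of_mem hmem]
  have : 0 < (invF w N).card := Finset.card_pos.mpr ⟨_, hmem⟩
  omega

lemma ascent_toggle (hN : Bdd w N) (hiN : i + 1 < N) (hd : ¬ w (i+1) < w i) :
    (invF w N).card + 1 = (invF (w * Equiv.swap i (i+1)) N).card := by
  have hd' : w i < w (i+1) := by
    rcases lt_trichotomy (w i) (w (i+1)) with h | h | h
    · exact h
    · exact absurd (w.injective h) (by omega)
    · exact absurd h hd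
  have hnmem : (i, i+1) ∉ invF w N := by
    rw [mem_invF]; push_neg; intro _ _ _
    show w i ≤ w (i+1)
    exact le_of_lt hd' 
  have hmem : (i, i+1) ∈ invF (w * Equiv.swap i (i+1)) N := by
    rw [mem_invF]
    refine ⟨by omega, hiN, by omega, ?_⟩
    simp only [Equiv.Perm.mul_apply, Equiv.swap_apply_left, Equiv.swap_apply_right]
    omega
  have h1 := invF_erase_card hN hiN
  rw [Finset.erase_eq_of_notMem hnmem] at h1
  rw [← h1, Finset.card_erase_of_mem hmem]
  have : 0 < (invF (w * Equiv.swap i (i+1)) N).card := Finset.card_pos.mpr ⟨_, hmem⟩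
  omega

lemma inv_descent (hw : FinSupp w) (hd : w (i+1) < w i) :
    inv (w * Equiv.swap i (i+1)) + 1 = inv w := by
  obtain ⟨N₀, hN₀⟩ := hw.exists_bdd
  set N := max N₀ (i+2) with hN
  have hb : Bdd w N := hN₀.mono (le_max_left _ _)
  have hb' : Bdd (w * Equiv.swap i (i+1)) N :=
    hb.mul (Bdd.swap i N (le_max_right _ _))
  rw [inv_eq_card hb, inv_eq_card hb']
  exact descent_toggle hb (by omega) hd

lemma inv_ascent (hw : FinSupp w) (hd : ¬ w (i+1) < w i) :
    inv w + 1 = inv (w * Equiv.swap i (i+1)) := by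
  obtain ⟨N₀, hN₀⟩ := hw.exists_bdd
  set N := max N₀ (i+2) with hN
  have hb : Bdd w N := hN₀.mono (le_max_left _ _)
  have hb' : Bdd (w * Equiv.swap i (i+1)) N :=
    hb.mul (Bdd.swap i N (le_max_right _ _))
  rw [inv_eq_card hb, inv_eq_card hb']
  exact ascent_toggle hb (by omega) hd

lemma finSupp_mul {u v : Equiv.Perm ℕ} (hu : FinSupp u) (hv : FinSupp v) :
    FinSupp (u * v) := by
  obtain ⟨N₁, h1⟩ := hu.exists_bdd
  obtain ⟨N₂, h2⟩ := hv.exists_bdd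
  exact ((h1.mono (le_max_left N₁ N₂)).mul (h2.mono (le_max_right N₁ N₂))).finSupp

lemma finSupp_swap (i : ℕ) : FinSupp (Equiv.swap i (i+1)) :=
  (Bdd.swap i (i+2) le_rfl).finSupp

/-- a nontrivial finitely supported permutation has a descent -/
lemma exists_descent (hw : FinSupp w) (hne : w ≠ 1) : ∃ i, w (i+1) < w i := by
  by_contra hc
  push_neg at hc
  have hmono : StrictMono w := strictMono_nat_of_lt_succ (fun n => by
    rcases lt_trichotomy (w n) (w (n+1)) with h | h | h
    · exact h
    · exact absurd (w.injective h) (by omega)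
    · exact absurd h (not_lt.mpr (hc n)))
  have hmono' : StrictMono (w⁻¹ : Equiv.Perm ℕ) := by
    intro a b hab
    by_contra hc'
    push_neg at hc'
    have := hmono.le_iff_le.mpr hc'
    simp at this
    omega
  apply hne
  ext k
  have h1 : k ≤ w k := hmono.le_apply
  have h2 : w k ≤ w⁻¹ (w k) := hmono'.le_apply
  rw [Equiv.Perm.inv_def, Equiv.symm_apply_apply] at h2
  show w k = k
  omega

end Toggle


section Len

lemma finSupp_listProd (l : List ℕ) :
    FinSupp ((l.map fun i => Equiv.swap i (i+1)).prod) := by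
  induction l with
  | nil => simpa using finSupp_one
  | cons a t ih =>
      rw [List.map_cons, List.prod_cons]
      exact finSupp_mul (finSupp_swap a) ih

lemma exists_word {w : Equiv.Perm ℕ} (hw : FinSupp w) :
    ∃ l : List ℕ, l.length = inv w ∧ (l.map fun i => Equiv.swap i (i+1)).prod = w := by
  generalize hn : inv w = n
  induction n using Nat.strong_induction_on generalizing w with
  | _ n ih =>
    by_cases h1 : w = 1
    · subst h1
      have : inv (1 : Equiv.Perm ℕ) = 0 := by
        rw [inv_eq_card (N := 0) (fun k _ => rfl)]
        simp [invF]
      refine ⟨[], by simp [← hn, this], by simp⟩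
    · obtain ⟨i, hi⟩ := exists_descent hw h1
      set w' := w * Equiv.swap i (i+1) with hw'
      have hfs' : FinSupp w' := finSupp_mul hw (finSupp_swap i)
      have htog := inv_descent hw hi
      rw [← hw'] at htog
      have hlt : inv w' < n := by omega
      obtain ⟨l, hl1, hl2⟩ := ih (inv w') hlt hfs' rfl
      refine ⟨l ++ [i], ?_, ?_⟩
      · simp [hl1]; omega
      · rw [List.map_append, List.prod_append]
        simp [hl2, hw']

lemma inv_le_word (l : List ℕ) :
    inv ((l.map fun i => Equiv.swap i (i+1)).prod) ≤ l.length := by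
  induction l using List.reverseRecOn with
  | nil =>
      simp
      rw [inv_eq_card (N := 0) (fun k _ => rfl)]
      simp [invF]
  | append_singleton t i ih =>
      rw [List.map_append, List.prod_append]
      simp only [List.map_cons, List.prod_cons, List.map_nil, List.prod_nil, mul_one,
        List.length_append, List.length_cons, List.length_nil]
      set v := ((t.map fun i => Equiv.swap i (i+1)).prod) with hv
      have hfs : FinSupp v := finSupp_listProd t
      by_cases hd : v (i+1) < v i
      · have := inv_descent hfs hd
        omega
      · have := inv_ascent hfs hd
        omega

lemma len_eq_inv {w : Equiv.Perm ℕ} (hw : FinSupp w) : len w = inv w := by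
  obtain ⟨l, hl1, hl2⟩ := exists_word hw
  apply le_antisymm
  · exact Nat.sInf_le ⟨l, hl1, hl2⟩
  · have hne : {k | ∃ l : List ℕ, l.length = k ∧
        (l.map fun i => Equiv.swap i (i+1)).prod = w}.Nonempty := ⟨_, l, hl1, hl2⟩
    obtain ⟨l', hl'1, hl'2⟩ := Nat.sInf_mem hne
    rw [len]
    calc inv w = inv ((l'.map fun i => Equiv.swap i (i+1)).prod) := by rw [hl'2]
    _ ≤ l'.length := inv_le_word l'
    _ = _ := hl'1

lemma len_descent {w : Equiv.Perm ℕ} {i : ℕ} (hw : FinSupp w) (hd : w (i+1) < w i) :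
    len (w * Equiv.swap i (i+1)) + 1 = len w := by
  rw [len_eq_inv hw, len_eq_inv (finSupp_mul hw (finSupp_swap i))]
  exact inv_descent hw hd

lemma eq_one_of_inv_eq_zero {w : Equiv.Perm ℕ} (hw : FinSupp w) (h : inv w = 0) :
    w = 1 := by
  by_contra hne
  obtain ⟨i, hi⟩ := exists_descent hw hne
  have := inv_descent hw hi
  omega

lemma eq_one_of_len_eq_zero {w : Equiv.Perm ℕ} (hw : FinSupp w) (h : len w = 0) :
    w = 1 := eq_one_of_inv_eq_zero hw (by rw [← len_eq_inv hw, h])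

end Len


section Code

variable {w : Equiv.Perm ℕ} {N i j : ℕ}

def crow (w : Equiv.Perm ℕ) (j : ℕ) : Set ℕ := {k | j < k ∧ w k < w j}

lemma crow_subset (hN : Bdd w N) (j : ℕ) : crow w j ⊆ Set.Iio N := by
  intro k ⟨hk1, hk2⟩
  simp only [Set.mem_Iio]
  by_contra hc
  simp only [not_lt] at hc
  rw [hN k hc] at hk2
  rcases lt_or_ge j N with h | h
  · have := hN.lt h; omega
  · rw [hN j h] at hk2; omega

lemma crow_finite (hw : FinSupp w) (j : ℕ) : (crow w j).Finite := by
  obtain ⟨N, hN⟩ := hw.exists_bdd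
  exact Set.Finite.subset (Set.finite_Iio N) (crow_subset hN j)

noncomputable def code (w : Equiv.Perm ℕ) : ℕ →₀ ℕ :=
  if h : FinSupp w then
    Finsupp.onFinset (Finset.range (bnd w)) (fun j => (crow w j).ncard) (fun j hj => by
      rw [Finset.mem_range]
      by_contra hc
      push_neg at hc
      apply hj
      show (crow w j).ncard = 0
      have hb := bnd_spec h
      have : crow w j = ∅ := by
        ext k
        simp only [crow, Set.mem_setOf_eq, Set.mem_empty_iff_false, iff_false, not_and, not_lt]
        intro hk
        rw [hb k (by omega), hb j hc]
        omega
      rw [this]; simp)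
  else 0

lemma code_apply (h : FinSupp w) : code w j = (crow w j).ncard := by
  rw [code, dif_pos h]; rfl

lemma crow_coe (hN : Bdd w N) (j : ℕ) :
    crow w j = ↑((Finset.Ico (j+1) N).filter fun k => w k < w j) := by
  ext k
  simp only [crow, Set.mem_setOf_eq, Finset.coe_filter, Finset.mem_Ico]
  constructor
  · intro ⟨h1, h2⟩
    exact ⟨⟨by omega, crow_subset hN j ⟨h1, h2⟩⟩, h2⟩
  · intro ⟨⟨h1, _⟩, h2⟩
    exact ⟨by omega, h2⟩

lemma code_card (h : FinSupp w) (hN : Bdd w N) :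
    code w j = ((Finset.Ico (j+1) N).filter fun k => w k < w j).card := by
  rw [code_apply h, crow_coe hN, Set.ncard_coe_finset]

lemma invF_biUnion (w : Equiv.Perm ℕ) (N : ℕ) :
    invF w N = (Finset.range N).biUnion
      (fun j => ((Finset.Ico (j+1) N).filter fun k => w k < w j).image (fun k => (j, k))) := by
  ext ⟨a, b⟩
  simp only [mem_invF, Finset.mem_biUnion, Finset.mem_range, Finset.mem_image,
    Finset.mem_filter, Finset.mem_Ico, Prod.mk.injEq]
  constructor
  · intro ⟨h1, h2, h3, h4⟩
    exact ⟨a, h1, b, ⟨⟨by omega, h2⟩, h4⟩, rfl, rfl⟩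
  · rintro ⟨j, hj, k, ⟨⟨hk1, hk2⟩, hk3⟩, rfl, rfl⟩
    exact ⟨hj, hk2, by omega, hk3⟩

lemma sum_code (h : FinSupp w) (hN : Bdd w N) :
    ∑ j ∈ Finset.range N, code w j = inv w := by
  rw [inv_eq_card hN, invF_biUnion w N, Finset.card_biUnion]
  · apply Finset.sum_congr rfl
    intro j _
    rw [code_card h hN, Finset.card_image_of_injective]
    intro a b hab
    exact (Prod.ext_iff.mp hab).2
  · intro a _ b _ hab
    simp only [Finset.disjoint_left, Finset.mem_image]
    rintro p ⟨k, _, rfl⟩ ⟨k', _, hk'⟩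
    exact hab ((Prod.ext_iff.mp hk').1).symm

lemma code_sum_eq_inv (h : FinSupp w) : (code w).sum (fun _ n => n) = inv w := by
  obtain ⟨N, hN⟩ := h.exists_bdd
  set M := max N (bnd w) with hM
  have hM' : Bdd w M := hN.mono (le_max_left _ _)
  rw [← sum_code h hM']
  rw [Finsupp.sum]
  apply Finset.sum_subset
  · intro x hx
    rw [Finset.mem_range]
    have : (code w).support ⊆ Finset.range (bnd w) := by
      rw [code, dif_pos h]
      exact Finsupp.support_onFinset_subset
    have := this hx
    rw [Finset.mem_range] at this
    omega
  · intro x _ hx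
    exact Finsupp.notMem_support_iff.mp hx

lemma code_pos_of_descent (h : FinSupp w) (hd : w (i+1) < w i) : code w i ≠ 0 := by
  rw [code_apply h]
  have : (i+1) ∈ crow w i := ⟨by omega, hd⟩
  have hpos := Set.ncard_pos (crow_finite h i) |>.mpr ⟨_, this⟩
  omega

/-- the largest entry of the code is a descent position -/
lemma descent_of_code_max (h : FinSupp w) {L : ℕ} (hL : code w L ≠ 0)
    (hmax : ∀ j, L < j → code w j = 0) : w (L+1) < w L := by
  rw [code_apply h] at hL
  have hne : (crow w L).Nonempty := by
    rw [Set.nonempty_iff_ne_empty]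
    intro hc
    rw [hc] at hL; simp at hL
  obtain ⟨k, hk1, hk2⟩ := hne
  by_contra hc
  push_neg at hc
  have hlt : w L < w (L+1) := by
    rcases lt_or_eq_of_le hc with h' | h'
    · exact h'
    · exact absurd (w.injective h') (by omega)
  have hkne : k ≠ L + 1 := by
    intro hc'
    rw [hc'] at hk2
    omega
  have : k ∈ crow w (L+1) := ⟨by omega, by omega⟩
  have := Set.ncard_pos (crow_finite h (L+1)) |>.mpr ⟨_, this⟩
  have := hmax (L+1) (by omega)
  rw [code_apply h] at this
  omega

section CodeDescent

variable (hw : FinSupp w) (hd : w (i+1) < w i)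

lemma finSupp_mul_swap (hw : FinSupp w) : FinSupp (w * Equiv.swap i (i+1)) :=
  finSupp_mul hw (finSupp_swap i)

include hw hd

lemma code_descent_i : code (w * Equiv.swap i (i+1)) i = code w (i+1) := by
  rw [code_apply (finSupp_mul_swap hw), code_apply hw]
  congr 1
  ext k
  simp only [crow, Set.mem_setOf_eq, Equiv.Perm.mul_apply, Equiv.swap_apply_left]
  constructor
  · intro ⟨h1, h2⟩
    rcases eq_or_lt_of_le (Nat.succ_le_of_lt h1) with h' | h'
    · exfalso
      rw [← h', Equiv.swap_apply_right] at h2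
      omega
    · rw [Equiv.swap_apply_of_ne_of_ne (by omega) (by omega)] at h2
      exact ⟨h', h2⟩
  · intro ⟨h1, h2⟩
    rw [Equiv.swap_apply_of_ne_of_ne (by omega) (by omega)]
    exact ⟨by omega, h2⟩

lemma code_descent_i1 : code (w * Equiv.swap i (i+1)) (i+1) + 1 = code w i := by
  rw [code_apply (finSupp_mul_swap hw), code_apply hw]
  have hset : crow (w * Equiv.swap i (i+1)) (i+1) = crow w i \ {i+1} := by
    ext k
    simp only [crow, Set.mem_setOf_eq, Equiv.Perm.mul_apply, Equiv.swap_apply_right,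
      Set.mem_diff, Set.mem_singleton_iff]
    constructor
    · intro ⟨h1, h2⟩
      rw [Equiv.swap_apply_of_ne_of_ne (by omega) (by omega)] at h2
      exact ⟨⟨by omega, h2⟩, by omega⟩
    · intro ⟨⟨h1, h2⟩, h3⟩
      have hk : i + 1 < k := by omega
      rw [Equiv.swap_apply_of_ne_of_ne (by omega) (by omega)]
      exact ⟨hk, h2⟩
  rw [hset]
  have hmem : (i+1) ∈ crow w i := ⟨by omega, hd⟩
  rw [Set.ncard_diff_singleton_of_mem hmem]
  have := Set.ncard_pos (crow_finite hw i) |>.mpr ⟨_, hmem⟩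
  omega

omit hd in
lemma code_descent_lt (hj : j < i) :
    code (w * Equiv.swap i (i+1)) j = code w j := by
  rw [code_apply (finSupp_mul_swap hw), code_apply hw]
  set e := Equiv.swap i (i+1) with he
  have hset : crow (w * e) j = ⇑e ⁻¹' (crow w j) := by
    ext k
    simp only [crow, Set.mem_setOf_eq, Equiv.Perm.mul_apply, Set.mem_preimage]
    have hej : e j = j := Equiv.swap_apply_of_ne_of_ne (by omega) (by omega)
    rw [hej]
    have hiff : j < e k ↔ j < k := by
      rw [he, Equiv.swap_apply_def]; split_ifs <;> omega
    rw [hiff]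
  have himg : ⇑e ⁻¹' (crow w j) = ⇑e.symm '' (crow w j) := by
    ext x
    simp only [Set.mem_preimage, Set.mem_image]
    constructor
    · intro hx; exact ⟨e x, hx, e.symm_apply_apply x⟩
    · rintro ⟨a, ha, rfl⟩; rwa [e.apply_symm_apply]
  rw [hset, himg, Set.ncard_image_of_injective _ e.symm.injective]

omit hd in
lemma code_descent_gt (hj : i + 1 < j) :
    code (w * Equiv.swap i (i+1)) j = code w j := by
  rw [code_apply (finSupp_mul_swap hw), code_apply hw]
  congr 1
  ext k
  simp only [crow, Set.mem_setOf_eq, Equiv.Perm.mul_apply]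
  have h1 : Equiv.swap i (i+1) j = j := Equiv.swap_apply_of_ne_of_ne (by omega) (by omega)
  rw [h1]
  constructor
  · intro ⟨hk1, hk2⟩
    rw [Equiv.swap_apply_of_ne_of_ne (by omega) (by omega)] at hk2
    exact ⟨hk1, hk2⟩
  · intro ⟨hk1, hk2⟩
    rw [Equiv.swap_apply_of_ne_of_ne (by omega) (by omega)]
    exact ⟨hk1, hk2⟩

end CodeDescent

end Code


section CodeBij

variable {w : Equiv.Perm ℕ}

lemma code_one : code (1 : Equiv.Perm ℕ) = 0 := by
  ext j
  rw [code_apply finSupp_one]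
  have : crow (1 : Equiv.Perm ℕ) j = ∅ := by
    ext k
    simp only [crow, Set.mem_setOf_eq, Equiv.Perm.one_apply, Set.mem_empty_iff_false, iff_false,
      not_and, not_lt]
    omega
  rw [this]
  simp

lemma code_eq_zero_iff (hw : FinSupp w) : code w = 0 ↔ w = 1 := by
  constructor
  · intro h
    by_contra hne
    obtain ⟨i, hi⟩ := exists_descent hw hne
    exact code_pos_of_descent hw hi (by rw [h]; rfl)
  · rintro rfl; exact code_one

lemma code_sum_eq_len (hw : FinSupp w) : (code w).sum (fun _ n => n) = len w := by
  rw [code_sum_eq_inv hw, len_eq_inv hw]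

/-- the coordinates of the code at a descent -/
lemma code_descent_eq (hw : FinSupp w) {i : ℕ} (hd : w (i+1) < w i) (j : ℕ) :
    code (w * Equiv.swap i (i+1)) j =
      if j = i then code w (i+1) else if j = i+1 then code w i - 1 else code w j := by
  split_ifs with h1 h2
  · subst h1; exact code_descent_i hw hd
  · subst h2
    have := code_descent_i1 hw hd
    omega
  · rcases lt_or_gt_of_ne h1 with h | h
    · exact code_descent_lt hw h
    · have : i + 1 < j := by omega
      exact code_descent_gt hw this

lemma code_injective {u v : Equiv.Perm ℕ} (hu : FinSupp u) (hv : FinSupp v)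
    (h : code u = code v) : u = v := by
  generalize hn : inv u = n
  induction n using Nat.strong_induction_on generalizing u v with
  | _ n ih =>
    by_cases h0 : code u = 0
    · rw [code_eq_zero_iff hu] at h0
      rw [h0]
      rw [h0, code_one] at h
      exact ((code_eq_zero_iff hv).mp h.symm).symm
    · have hsupp : (code u).support.Nonempty := Finsupp.support_nonempty_iff.mpr h0
      set L := (code u).support.max' hsupp with hLdef
      have hL : code u L ≠ 0 := Finsupp.mem_support_iff.mp ((code u).support.max'_mem hsupp)
      have hmax : ∀ j, L < j → code u j = 0 := by
        intro j hj
        by_contra hc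
        have := Finset.le_max' _ j (Finsupp.mem_support_iff.mpr hc)
        omega
      have hdu : u (L+1) < u L := descent_of_code_max hu hL hmax
      have hdv : v (L+1) < v L := descent_of_code_max hv (h ▸ hL) (fun j hj => h ▸ hmax j hj)
      have hcode' : code (u * Equiv.swap L (L+1)) = code (v * Equiv.swap L (L+1)) := by
        ext j
        rw [code_descent_eq hu hdu j, code_descent_eq hv hdv j, h]
      have hinv : inv (u * Equiv.swap L (L+1)) < n := by
        have := inv_descent hu hdu
        omega
      have := ih _ hinv (finSupp_mul_swap hu) (finSupp_mul_swap hv) hcode' rfl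
      have := congrArg (fun x => x * Equiv.swap L (L+1)) this
      simpa [mul_assoc] using this

lemma code_surjective (c : ℕ →₀ ℕ) : ∃ w : Equiv.Perm ℕ, FinSupp w ∧ code w = c := by
  generalize hn : c.sum (fun _ n => n) = n
  induction n using Nat.strong_induction_on generalizing c with
  | _ n ih =>
    by_cases h0 : c = 0
    · exact ⟨1, finSupp_one, by rw [code_one, h0]⟩
    · have hsupp : c.support.Nonempty := Finsupp.support_nonempty_iff.mpr h0
      set L := c.support.max' hsupp with hLdef
      have hL : c L ≠ 0 := Finsupp.mem_support_iff.mp (c.support.max'_mem hsupp)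
      have hmax : ∀ j, L < j → c j = 0 := by
        intro j hj
        by_contra hc
        have := Finset.le_max' _ j (Finsupp.mem_support_iff.mpr hc)
        omega
      set c' : ℕ →₀ ℕ := c.erase L + Finsupp.single (L+1) (c L - 1) with hc'def
      have hcL1 : c (L+1) = 0 := hmax (L+1) (by omega)
      have hc'j : ∀ j, c' j = if j = L then 0 else if j = L+1 then c L - 1 else c j := by
        intro j
        rw [hc'def]
        simp only [Finsupp.add_apply, Finsupp.erase_apply, Finsupp.single_apply]
        rcases eq_or_ne j L with rfl | h1
        · rw [if_pos rfl, if_pos rfl, if_neg (show ¬ L + 1 = L by omega), add_zero]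
        · rw [if_neg h1, if_neg h1]
          rcases eq_or_ne j (L+1) with rfl | h2
          · rw [if_pos rfl, if_pos rfl, hcL1, zero_add]
          · rw [if_neg (fun h => h2 h.symm), if_neg h2, add_zero]
      have hc'sum : c'.sum (fun _ n => n) + 1 = c.sum (fun _ n => n) := by
        rw [hc'def, Finsupp.sum_add_index (by simp) (fun _ _ _ _ => rfl)]
        rw [Finsupp.sum_single_index (by rfl)]
        have herase : (fun (_ : ℕ) (n : ℕ) => n) L (c L) + (c.erase L).sum (fun _ n => n)
            = c.sum (fun _ n => n) :=
          Finsupp.add_sum_erase c L (fun _ n => n) (Finsupp.mem_support_iff.mpr hL)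
        simp only at herase
        omega
      obtain ⟨w', hw'fs, hw'code⟩ := ih (c'.sum fun _ n => n) (by omega) c' rfl
      have hasc : w' L < w' (L+1) := by
        have h0 : code w' L = 0 := by rw [hw'code, hc'j L]; simp
        rw [code_apply hw'fs] at h0
        have hempty : crow w' L = ∅ := by
          have := crow_finite hw'fs L
          rcases Set.eq_empty_or_nonempty (crow w' L) with h | h
          · exact h
          · exfalso
            have := Set.ncard_pos this |>.mpr h
            omega
        have hnin : (L+1) ∉ crow w' L := by rw [hempty]; exact Set.notMem_empty _
        simp only [crow, Set.mem_setOf_eq, not_and, not_lt] at hnin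
        have := hnin (by omega)
        rcases lt_or_eq_of_le this with h | h
        · exact h
        · exact absurd (w'.injective h) (by omega)
      set w : Equiv.Perm ℕ := w' * Equiv.swap L (L+1) with hwdef
      have hwfs : FinSupp w := finSupp_mul_swap hw'fs
      have hd : w (L+1) < w L := by
        have e1 : w (L+1) = w' L := by
          rw [hwdef]; simp [Equiv.Perm.mul_apply, Equiv.swap_apply_right]
        have e2 : w L = w' (L+1) := by
          rw [hwdef]; simp [Equiv.Perm.mul_apply, Equiv.swap_apply_left]
        omega
      have hback : w * Equiv.swap L (L+1) = w' := by
        rw [hwdef, mul_assoc, Equiv.swap_mul_self, mul_one]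
      refine ⟨w, hwfs, ?_⟩
      have hkey := fun j => code_descent_eq hwfs hd j
      rw [hback] at hkey
      have hcodeL : code w L = c L := by
        have h5 := hkey (L+1)
        rw [if_neg (show ¬ L + 1 = L by omega), if_pos rfl, hw'code, hc'j (L+1),
          if_neg (show ¬ L + 1 = L by omega), if_pos rfl] at h5
        have hpos := code_pos_of_descent hwfs hd
        omega
      ext j
      rcases eq_or_ne j L with rfl | hjL
      · exact hcodeL
      rcases eq_or_ne j (L+1) with rfl | hjL1
      · have h5 := hkey L
        rw [if_pos rfl, hw'code, hc'j L, if_pos rfl] at h5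
        omega
      · have h5 := hkey j
        rw [if_neg hjL, if_neg hjL1, hw'code, hc'j j, if_neg hjL, if_neg hjL1] at h5
        omega

end CodeBij


section Monomialtools

/-- swap action on exponent vectors -/
def msw (i : ℕ) (m : ℕ →₀ ℕ) : ℕ →₀ ℕ := Finsupp.mapDomain (Equiv.swap i (i+1)) m

lemma msw_apply (i : ℕ) (m : ℕ →₀ ℕ) (a : ℕ) :
    msw i m a = m (Equiv.swap i (i+1) a) := by
  rw [msw]
  have : (Equiv.swap i (i+1)).symm a = Equiv.swap i (i+1) a := by
    rw [Equiv.symm_swap]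
  rw [← this, Finsupp.mapDomain_equiv_apply]

lemma msw_msw (i : ℕ) (m : ℕ →₀ ℕ) : msw i (msw i m) = m := by
  ext a
  rw [msw_apply, msw_apply, Equiv.swap_apply_self]

lemma coeff_msw_swapVar (i : ℕ) (m : ℕ →₀ ℕ) (f : Pol) :
    coeff (msw i m) (swapVar i f) = coeff m f :=
  coeff_rename_mapDomain _ (Equiv.swap i (i+1)).injective f m

lemma coeff_swapVar (i : ℕ) (m : ℕ →₀ ℕ) (f : Pol) :
    coeff m (swapVar i f) = coeff (msw i m) f := by
  conv_lhs => rw [← msw_msw i m]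
  rw [coeff_msw_swapVar]

/-- exponents bounded below n -/
def vbd (f : Pol) (n : ℕ) : Prop := ∀ m ∈ f.support, ∀ j, n ≤ j → m j = 0

lemma vbd_of_symm {f : Pol} {n : ℕ} (h : ∀ i, n ≤ i → swapVar i f = f) : vbd f n := by
  intro m hm j hj
  by_contra hc
  have hU : j ∈ f.support.biUnion (fun m => m.support) :=
    Finset.mem_biUnion.mpr ⟨m, hm, Finsupp.mem_support_iff.mpr hc⟩
  set U := f.support.biUnion (fun m => m.support) with hUdef
  have hUne : U.Nonempty := ⟨j, hU⟩
  set K := U.max' hUne with hK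
  have hjK : j ≤ K := Finset.le_max' U j hU
  obtain ⟨m1, hm1f, hm1K⟩ := Finset.mem_biUnion.mp (U.max'_mem hUne)
  have hKn : n ≤ K := le_trans hj hjK
  have hfix := h K hKn
  have hcoeff : coeff (msw K m1) f ≠ 0 := by
    rw [← hfix, coeff_msw_swapVar]
    exact Finsupp.mem_support_iff.mp hm1f
  have hm2 : msw K m1 ∈ f.support := Finsupp.mem_support_iff.mpr hcoeff
  have hval : msw K m1 (K+1) ≠ 0 := by
    rw [msw_apply, Equiv.swap_apply_right]
    exact Finsupp.mem_support_iff.mp hm1K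
  have : (K+1) ∈ U :=
    Finset.mem_biUnion.mpr ⟨_, hm2, Finsupp.mem_support_iff.mpr hval⟩
  have := Finset.le_max' U _ this
  omega

/-- tail sum of an exponent vector -/
def tlsum (m : ℕ →₀ ℕ) (t : ℕ) : ℕ := m.sum (fun j n => if t ≤ j then n else 0)

lemma tlsum_add (m1 m2 : ℕ →₀ ℕ) (t : ℕ) :
    tlsum (m1 + m2) t = tlsum m1 t + tlsum m2 t := by
  unfold tlsum
  rw [Finsupp.sum_add_index (fun j _ => by simp) (fun j _ n1 n2 => by split_ifs <;> simp)]

lemma tlsum_single (a b t : ℕ) : tlsum (Finsupp.single a b) t = if t ≤ a then b else 0 := by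
  unfold tlsum
  rcases eq_or_ne b 0 with rfl | hb
  · simp
  · rw [Finsupp.sum_single_index (by simp)]

lemma tlsum_zero_eq (m : ℕ →₀ ℕ) : tlsum m 0 = m.sum (fun _ n => n) := by
  unfold tlsum
  apply Finsupp.sum_congr
  intro j _
  simp

lemma tlsum_eq_zero {m : ℕ →₀ ℕ} {t : ℕ} (h : ∀ j, t ≤ j → m j = 0) : tlsum m t = 0 := by
  unfold tlsum
  apply Finset.sum_eq_zero
  intro j hj
  simp only
  split_ifs with ht
  · exact h j ht
  · rfl

lemma tlsum_le_of_le {m : ℕ →₀ ℕ} {t t' : ℕ} (h : t ≤ t') : tlsum m t' ≤ tlsum m t := by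
  unfold tlsum
  apply Finset.sum_le_sum
  intro j _
  simp only
  split_ifs <;> omega

lemma tlsum_erase_max {m : ℕ →₀ ℕ} {L : ℕ} (hsup : ∀ j, L < j → m j = 0) {t : ℕ} :
    tlsum m t = tlsum (m.erase L) t + (if t ≤ L then m L else 0) := by
  conv_lhs => rw [← Finsupp.single_add_erase L m]
  rw [tlsum_add, tlsum_single]
  ring

end Monomialtools


section Chain

variable {m : ℕ →₀ ℕ} {L : ℕ}

/-- the exponent vector with the top block moved from `L` to `L+t` -/
def mv (m : ℕ →₀ ℕ) (L t : ℕ) : ℕ →₀ ℕ := m.erase L + Finsupp.single (L+t) (m L)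

variable (hL : m L ≠ 0) (hsup : ∀ j, L < j → m j = 0)

lemma mv_zero : mv m L 0 = m := by
  show m.erase L + Finsupp.single (L+0) (m L) = m
  rw [show L + 0 = L from rfl, add_comm]
  exact Finsupp.single_add_erase L m

include hsup

lemma mv_apply (t a : ℕ) : mv m L t a = if a = L + t then m L else if L ≤ a then 0 else m a := by
  rw [mv, Finsupp.add_apply, Finsupp.erase_apply, Finsupp.single_apply]
  rcases eq_or_ne a (L+t) with rfl | h1
  · rw [if_pos rfl, if_pos rfl]
    by_cases h : t = 0
    · subst h
      rw [if_pos (show L + 0 = L by omega)]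
      simp
    · rw [if_neg (show ¬ L + t = L by omega), hsup _ (by omega), zero_add]
  · rw [if_neg (show ¬ (L + t = a) from fun h => h1 h.symm), add_zero, if_neg h1]
    rcases lt_or_ge a L with h2 | h2
    · rw [if_neg (show ¬ a = L by omega), if_neg (show ¬ L ≤ a by omega)]
    · rcases eq_or_ne a L with rfl | h3
      · rw [if_pos rfl, if_pos le_rfl]
      · rw [if_neg h3, if_pos h2, hsup _ (by omega)]

lemma msw_mv (t : ℕ) : msw (L+t) (mv m L t) = mv m L (t+1) := by
  ext a
  rw [msw_apply]
  rcases eq_or_ne a (L+t) with rfl | h1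
  · rw [Equiv.swap_apply_left, mv_apply hsup, mv_apply hsup,
      if_neg (show ¬ L+t+1 = L+t by omega), if_pos (show L ≤ L+t+1 by omega),
      if_neg (show ¬ L+t = L+(t+1) by omega), if_pos (show L ≤ L+t by omega)]
  rcases eq_or_ne a (L+t+1) with rfl | h2
  · rw [Equiv.swap_apply_right, mv_apply hsup, mv_apply hsup,
      if_pos (show (L+t : ℕ) = L+t from rfl), if_pos (show (L+t+1 : ℕ) = L+(t+1) by omega)]
  · rw [Equiv.swap_apply_of_ne_of_ne h1 (by omega), mv_apply hsup, mv_apply hsup,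
      if_neg h1, if_neg (show ¬ a = L+(t+1) by omega)]

lemma tlsum_mv {t t' : ℕ} (ht' : t' ≤ L) : tlsum (mv m L t) t' = tlsum m t' := by
  rw [mv, tlsum_add, tlsum_single, if_pos (by omega), tlsum_erase_max hsup, if_pos ht']

lemma mv_last (t : ℕ) : mv m L t (L+t) = m L := by
  rw [mv_apply hsup, if_pos rfl]

lemma mv_lt {t a : ℕ} (ha : a < L) : mv m L t a = m a := by
  rw [mv_apply hsup, if_neg (by omega), if_neg (by omega)]

lemma mv_mid {t a : ℕ} (ha : L ≤ a) (ha2 : a ≠ L + t) : mv m L t a = 0 := by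
  rw [mv_apply hsup, if_neg ha2, if_pos ha]

lemma chain_telescope (f : Pol) (T : ℕ) :
    coeff m f = (∑ t ∈ Finset.range T, coeff (mv m L t) (f - swapVar (L+t) f))
      + coeff (mv m L T) f := by
  induction T with
  | zero => rw [Finset.range_zero, Finset.sum_empty, zero_add, mv_zero]
  | succ T ih =>
      rw [Finset.sum_range_succ, ih]
      have heq : coeff (mv m L T) f
          = coeff (mv m L T) (f - swapVar (L+T) f) + coeff (mv m L (T+1)) f := by
        have e1 : coeff (mv m L T) (swapVar (L+T) f) = coeff (mv m L (T+1)) f := by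
          rw [coeff_swapVar, msw_mv hsup]
        rw [coeff_sub, ← e1]
        ring
      rw [heq]
      ring

include hL

lemma coeff_mv_eq_zero {f : Pol} {N : ℕ} (hv : vbd f N) {T : ℕ} (hT : N ≤ L + T) :
    coeff (mv m L T) f = 0 := by
  by_contra hc
  have := hv (mv m L T) (Finsupp.mem_support_iff.mpr hc) (L+T) hT
  rw [mv_last hsup] at this
  exact hL this

lemma chain_full {f : Pol} {N : ℕ} (hv : vbd f N) {T : ℕ} (hT : N ≤ L + T) :
    coeff m f = ∑ t ∈ Finset.range T, coeff (mv m L t) (f - swapVar (L+t) f) := by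
  rw [chain_telescope hsup f T, coeff_mv_eq_zero hL hsup hv hT, add_zero]

end Chain


section FamilyAux

/-- coefficient extraction for `(X i - X (i+1)) * g` -/
lemma coeff_dmul {i : ℕ} {m : ℕ →₀ ℕ} (g : Pol) (h1 : m (i+1) = 0) (hi : m i ≠ 0) :
    coeff m ((X i - X (i+1)) * g) = coeff (m - Finsupp.single i 1) g := by
  rw [sub_mul, coeff_sub, coeff_X_mul', coeff_X_mul',
    if_pos (Finsupp.mem_support_iff.mpr hi),
    if_neg (fun hc => (Finsupp.mem_support_iff.mp hc) h1), sub_zero]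

lemma sub_single_add {m : ℕ →₀ ℕ} {i : ℕ} (hi : m i ≠ 0) :
    (m - Finsupp.single i 1) + Finsupp.single i 1 = m := by
  ext a
  simp only [Finsupp.add_apply, Finsupp.tsub_apply, Finsupp.single_apply]
  split_ifs with h
  · subst h; omega
  · omega

lemma tlsum_sub_single {m : ℕ →₀ ℕ} {i : ℕ} (hi : m i ≠ 0) (t : ℕ) :
    tlsum (m - Finsupp.single i 1) t + (if t ≤ i then 1 else 0) = tlsum m t := by
  conv_rhs => rw [← sub_single_add hi]
  rw [tlsum_add, tlsum_single]

lemma tlsum_split2 (m : ℕ →₀ ℕ) (i t : ℕ) :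
    tlsum m t = tlsum ((m.erase i).erase (i+1)) t
      + (if t ≤ i then m i else 0) + (if t ≤ i + 1 then m (i+1) else 0) := by
  have e1 : tlsum m t = tlsum (m.erase i) t + (if t ≤ i then m i else 0) := by
    conv_lhs => rw [← Finsupp.single_add_erase i m]
    rw [tlsum_add, tlsum_single]
    ring
  have e2 : tlsum (m.erase i) t
      = tlsum ((m.erase i).erase (i+1)) t + (if t ≤ i + 1 then m (i+1) else 0) := by
    conv_lhs => rw [← Finsupp.single_add_erase (i+1) (m.erase i)]
    rw [tlsum_add, tlsum_single, Finsupp.erase_ne (show i + 1 ≠ i by omega)]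
    ring
  omega

/-- tail sums drop by exactly one at a descent, for cut-offs `≤ i` -/
lemma tlsum_code_descent {w : Equiv.Perm ℕ} (hw : FinSupp w) {i : ℕ}
    (hd : w (i+1) < w i) {t : ℕ} (ht : t ≤ i) :
    tlsum (code (w * Equiv.swap i (i+1))) t + 1 = tlsum (code w) t := by
  have hkey := code_descent_eq hw hd
  set c := code w
  set c' := code (w * Equiv.swap i (i+1))
  have he : (c'.erase i).erase (i+1) = (c.erase i).erase (i+1) := by
    ext a
    rcases eq_or_ne a i with rfl | h1
    · rw [Finsupp.erase_ne (show a ≠ a + 1 by omega), Finsupp.erase_same,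
        Finsupp.erase_ne (show a ≠ a + 1 by omega), Finsupp.erase_same]
    rcases eq_or_ne a (i+1) with rfl | h2
    · rw [Finsupp.erase_same, Finsupp.erase_same]
    · rw [Finsupp.erase_ne h2, Finsupp.erase_ne h1, Finsupp.erase_ne h2, Finsupp.erase_ne h1]
      rw [hkey a, if_neg h1, if_neg h2]
  have hpos : c i ≠ 0 := code_pos_of_descent hw hd
  have h1 := tlsum_split2 c i t
  have h2 := tlsum_split2 c' i t
  rw [he] at h2
  have e1 : c' i = c (i+1) := by rw [hkey i, if_pos rfl]
  have e2 : c' (i+1) = c i - 1 := by rw [hkey (i+1), if_neg (by omega), if_pos rfl]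
  rw [e1, e2] at h2
  rw [if_pos ht, if_pos (by omega)] at h1 h2
  omega

/-- degree bridge -/
lemma tlsum_zero_of_homog {f : Pol} {n : ℕ} (hf : f.IsHomogeneous n) {m : ℕ →₀ ℕ}
    (hm : m ∈ f.support) : tlsum m 0 = n := by
  have := hf (Finsupp.mem_support_iff.mp hm)
  erw [← Finsupp.degree_eq_weight_one] at this
  rw [tlsum_zero_eq, ← this, Finsupp.degree, Finsupp.sum]
  rfl

end FamilyAux


section Family

variable {S : Equiv.Perm ℕ → Pol} (hS : IsSchubertFamily S)
include hS

lemma sub_swap_eq {w : Equiv.Perm ℕ} (hw : FinSupp w) (i : ℕ) :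
    S w - swapVar i (S w) = (X i - X (i+1)) *
      (if w (i+1) < w i then S (w * Equiv.swap i (i+1)) else 0) := by
  rw [← hS.2.2 w hw i]
  exact (ddiff_spec i (S w)).symm

lemma swap_inv_S {w : Equiv.Perm ℕ} (hw : FinSupp w) {i : ℕ} (h : ¬ w (i+1) < w i) :
    swapVar i (S w) = S w :=
  swapVar_eq_of_ddiff_eq_zero (by rw [hS.2.2 w hw i, if_neg h])

lemma vbd_S {w : Equiv.Perm ℕ} (hw : FinSupp w) {n : ℕ}
    (hdesc : ∀ i, w (i+1) < w i → i < n) : vbd (S w) n :=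
  vbd_of_symm (fun i hi => swap_inv_S hS hw (fun hd => absurd (hdesc i hd) (by omega)))

omit hS in
lemma descent_bound {w : Equiv.Perm ℕ} {N : ℕ} (hN : Bdd w N) :
    ∀ i, w (i+1) < w i → i < N := by
  intro i hd
  by_contra hc
  push_neg at hc
  rw [hN i hc, hN (i+1) (by omega)] at hd
  omega

lemma chain_S {w : Equiv.Perm ℕ} (hw : FinSupp w) {N : ℕ} (hN : Bdd w N)
    {m : ℕ →₀ ℕ} {L : ℕ} (hL : m L ≠ 0) (hsup : ∀ j, L < j → m j = 0) :
    coeff m (S w) = ∑ t ∈ Finset.range N, coeff (mv m L t)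
      ((X (L+t) - X (L+t+1)) *
        (if w (L+t+1) < w (L+t) then S (w * Equiv.swap (L+t) (L+t+1)) else 0)) := by
  have hv : vbd (S w) N := vbd_S hS hw (descent_bound hN)
  rw [chain_full hL hsup hv (show N ≤ L + N by omega)]
  apply Finset.sum_congr rfl
  intro t _
  rw [sub_swap_eq hS hw (L+t)]

theorem main_tri : ∀ n (w : Equiv.Perm ℕ), FinSupp w → len w = n →
    (coeff (code w) (S w) = 1) ∧
    (∀ m ∈ (S w).support, ∀ t, tlsum m t ≤ tlsum (code w) t) ∧
    (∀ L, 1 ≤ L → code w L ≠ 0 → (∀ j, L < j → code w j = 0) → code w (L-1) = 0 →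
      coeff ((code w).erase L + Finsupp.single (L-1) (code w L)) (S w) = 1) := by
  intro n
  induction n using Nat.strong_induction_on with
  | _ n ih =>
    intro w hw hlen
    by_cases h1 : w = 1
    · subst h1
      rw [hS.2.1, code_one]
      refine ⟨by simp [coeff_one], ?_, ?_⟩
      · intro m hm t
        have hm0 : m = 0 := by
          by_contra hc
          have := MvPolynomial.mem_support_iff.mp hm
          rw [coeff_one, if_neg (fun h => hc h.symm)] at this
          exact this rfl
        subst hm0
        have hz : tlsum (0 : ℕ →₀ ℕ) t = 0 := by
          unfold tlsum
          exact Finsupp.sum_zero_index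
        simp [hz]
      · intro L _ hL0
        simp at hL0
    · -- inductive step
      have hn1 : 1 ≤ n := by
        rcases Nat.eq_zero_or_pos n with rfl | h
        · exact absurd (eq_one_of_len_eq_zero hw hlen) h1
        · exact h
      have hcne : code w ≠ 0 := fun hc => h1 ((code_eq_zero_iff hw).mp hc)
      have hsupp : (code w).support.Nonempty := Finsupp.support_nonempty_iff.mpr hcne
      set c := code w with hcdef
      set L := c.support.max' hsupp with hLdef
      have hL : c L ≠ 0 := Finsupp.mem_support_iff.mp (c.support.max'_mem hsupp)
      have hmax : ∀ j, L < j → c j = 0 := by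
        intro j hj
        by_contra hc2
        have := Finset.le_max' _ j (Finsupp.mem_support_iff.mpr hc2)
        omega
      have hdL : w (L+1) < w L := descent_of_code_max hw hL hmax
      set w' := w * Equiv.swap L (L+1) with hw'def
      have hw' : FinSupp w' := finSupp_mul_swap hw
      have hlenD : len w' + 1 = n := by
        rw [← hlen]
        have := len_descent hw hdL
        rw [← hw'def] at this
        exact this
      have hcL1 : c (L+1) = 0 := hmax (L+1) (by omega)
      have hc'key : ∀ j, code w' j =
          if j = L then c (L+1) else if j = L+1 then c L - 1 else c j := by
        have := code_descent_eq hw hdL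
        rw [← hw'def] at this
        exact this
      have IH := ih (n-1) (by omega) w' hw' (by omega)
      -- the common quantity equals 1
      have hQ : coeff (c - Finsupp.single L 1) (S w') = 1 := by
        have e2 : code w' (L+1) = c L - 1 := by
          rw [hc'key (L+1)]; split_ifs <;> omega
        by_cases hb : c L = 1
        · have he : c - Finsupp.single L 1 = code w' := by
            ext a
            rw [Finsupp.tsub_apply, Finsupp.single_apply, hc'key a]
            rcases eq_or_ne a L with rfl | ha1
            · split_ifs <;> omega
            rcases eq_or_ne a (L+1) with rfl | ha2
            · split_ifs <;> omega
            · split_ifs <;> omega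
          rw [he]
          exact IH.1
        · have he : c - Finsupp.single L 1
              = (code w').erase (L+1) + Finsupp.single ((L+1)-1) (code w' (L+1)) := by
            show c - Finsupp.single L 1
              = (code w').erase (L+1) + Finsupp.single L (code w' (L+1))
            ext a
            rw [Finsupp.add_apply, Finsupp.tsub_apply, Finsupp.single_apply,
              Finsupp.single_apply, Finsupp.erase_apply, e2, hc'key a]
            rcases eq_or_ne a L with rfl | ha1
            · split_ifs <;> omega
            rcases eq_or_ne a (L+1) with rfl | ha2
            · split_ifs <;> omega
            · split_ifs <;> omega
          rw [he]
          exact IH.2.2 (L+1) (by omega) (by rw [e2]; omega)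
            (fun j hj => by
              rw [hc'key j, if_neg (show ¬ j = L by omega),
                if_neg (show ¬ j = L+1 by omega)]
              exact hmax j (by omega))
            (by
              show code w' L = 0
              rw [hc'key L]
              split_ifs <;> omega)
      obtain ⟨N, hN⟩ := hw.exists_bdd
      have hLN : L < N := descent_bound hN L hdL
      have hterm : ∀ t, L < L + t → ¬ w (L+t+1) < w (L+t) := by
        intro t ht hd
        have h0 : code w (L+t) = 0 := hmax (L+t) ht
        exact (code_pos_of_descent hw hd) h0
      -- Part A
      have hA : coeff c (S w) = coeff (c - Finsupp.single L 1) (S w') := by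
        rw [chain_S hS hw hN hL hmax]
        rw [Finset.sum_eq_single 0]
        · rw [Nat.add_zero, mv_zero, if_pos hdL, ← hw'def]
          exact coeff_dmul _ hcL1 hL
        · intro b _ hb
          rw [if_neg (hterm b (by omega)), mul_zero, coeff_zero]
        · intro h0
          exact absurd (Finset.mem_range.mpr (by omega)) h0
      refine ⟨hA.trans hQ, ?_, ?_⟩
      · -- Part B
        intro m hm t'
        have hdeg : tlsum m 0 = n := by
          have := tlsum_zero_of_homog (hS.1 w hw) hm
          rw [hlen] at this
          exact this
        have hm0 : m ≠ 0 := by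
          intro hc2
          subst hc2
          have hz : tlsum (0 : ℕ →₀ ℕ) 0 = 0 := by
            unfold tlsum
            exact Finsupp.sum_zero_index
          omega
        have hmsupp : m.support.Nonempty := Finsupp.support_nonempty_iff.mpr hm0
        set Lm := m.support.max' hmsupp with hLmdef
        have hLm : m Lm ≠ 0 := Finsupp.mem_support_iff.mp (m.support.max'_mem hmsupp)
        have hsupm : ∀ j, Lm < j → m j = 0 := by
          intro j hj
          by_contra hc2
          have := Finset.le_max' _ j (Finsupp.mem_support_iff.mpr hc2)
          omega
        have hchain := chain_S hS hw hN hLm hsupm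
        have hne : coeff m (S w) ≠ 0 := MvPolynomial.mem_support_iff.mp hm
        rw [hchain] at hne
        obtain ⟨t0, _, ht0⟩ := Finset.exists_ne_zero_of_sum_ne_zero hne
        by_cases hdi : w (Lm+t0+1) < w (Lm+t0)
        · rw [if_pos hdi] at ht0
          have hmvia : mv m Lm t0 (Lm+t0+1) = 0 := mv_mid hsupm (by omega) (by omega)
          have hmvi : mv m Lm t0 (Lm+t0) ≠ 0 := by
            rw [mv_last hsupm]; exact hLm
          rw [coeff_dmul _ hmvia hmvi] at ht0
          have hμ : (mv m Lm t0 - Finsupp.single (Lm+t0) 1)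
              ∈ (S (w * Equiv.swap (Lm+t0) (Lm+t0+1))).support :=
            MvPolynomial.mem_support_iff.mpr ht0
          have hwi' : FinSupp (w * Equiv.swap (Lm+t0) (Lm+t0+1)) := finSupp_mul_swap hw
          have hleniD : len (w * Equiv.swap (Lm+t0) (Lm+t0+1)) + 1 = n := by
            rw [← hlen]
            exact len_descent hw hdi
          have IHB := (ih (n-1) (by omega) _ hwi' (by omega)).2.1 _ hμ
          rcases le_or_gt t' Lm with ht' | ht'
          · have e1 : tlsum (mv m Lm t0 - Finsupp.single (Lm+t0) 1) t' + 1 = tlsum m t' := by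
              have ha := tlsum_sub_single hmvi t'
              rw [if_pos (by omega)] at ha
              have hb := tlsum_mv hsupm (t := t0) ht'
              omega
            have e3 := tlsum_code_descent hw hdi (t := t') (by omega)
            rw [← hcdef] at e3
            have := IHB t'
            omega
          · have : tlsum m t' = 0 := tlsum_eq_zero (fun j hj => hsupm j (by omega))
            omega
        · rw [if_neg hdi, mul_zero, coeff_zero] at ht0
          exact absurd rfl ht0
      · -- Part K
        intro L2 hL2 hL2ne hL2max hL2prev
        have hLL : L2 = L := by
          have ha : L2 ≤ L := by
            by_contra hc2
            push_neg at hc2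
            exact hL2ne (hmax L2 hc2)
          have hb : L ≤ L2 := by
            by_contra hc2
            push_neg at hc2
            exact hL (hL2max L hc2)
          omega
        subst hLL
        set L0 := L - 1 with hL0def
        have hL0 : L0 + 1 = L := by omega
        set mstar := c.erase L + Finsupp.single L0 (c L) with hmstardef
        have hmstarL0 : mstar L0 = c L := by
          rw [hmstardef, Finsupp.add_apply, Finsupp.erase_apply, Finsupp.single_apply,
            if_neg (show ¬ L0 = L by omega), if_pos (show L0 = L0 from rfl)]
          have h5 : c L0 = 0 := hL2prev
          omega
        have hmstarne : mstar L0 ≠ 0 := by rw [hmstarL0]; exact hL2ne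
        have hsupstar : ∀ j, L0 < j → mstar j = 0 := by
          intro j hj
          rw [hmstardef, Finsupp.add_apply, Finsupp.erase_apply, Finsupp.single_apply,
            if_neg (show ¬ L0 = j by omega)]
          rcases eq_or_ne j L with rfl | hj2
          · rw [if_pos rfl, add_zero]
          · rw [if_neg hj2, hmax j (by omega), add_zero]
        have hmv1 : mv mstar L0 1 = c := by
          ext a
          rw [mv_apply hsupstar]
          rcases eq_or_ne a (L0+1) with rfl | ha1
          · rw [if_pos rfl, hmstarL0, hL0]
          rcases le_or_gt L0 a with ha2 | ha2
          · rw [if_neg ha1, if_pos ha2]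
            rcases eq_or_ne a L0 with rfl | ha3
            · exact hL2prev.symm
            · exact (hmax a (by omega)).symm
          · rw [if_neg ha1, if_neg (by omega), hmstardef, Finsupp.add_apply,
              Finsupp.erase_apply, Finsupp.single_apply,
              if_neg (show ¬ a = L by omega), if_neg (show ¬ L0 = a by omega), add_zero]
        show coeff mstar (S w) = 1
        have hK : coeff mstar (S w) = coeff (c - Finsupp.single L 1) (S w') := by
          rw [chain_S hS hw hN hmstarne hsupstar]
          rw [Finset.sum_eq_single 1]
          · rw [hmv1, hL0, if_pos hdL, ← hw'def]
            exact coeff_dmul _ hcL1 hL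
          · intro b _ hb
            rcases Nat.eq_zero_or_pos b with rfl | hbpos
            · rw [Nat.add_zero]
              have hnd : ¬ w (L0+1) < w L0 := by
                intro hd
                have h6 : code w L0 = 0 := hL2prev
                exact (code_pos_of_descent hw hd) h6
              rw [if_neg hnd, mul_zero, coeff_zero]
            · have hnd : ¬ w (L0+b+1) < w (L0+b) := by
                intro hd
                have h6 : code w (L0+b) = 0 := hmax (L0+b) (by omega)
                exact (code_pos_of_descent hw hd) h6
              rw [if_neg hnd, mul_zero, coeff_zero]
          · intro h0
            exact absurd (Finset.mem_range.mpr (by omega)) h0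
        exact hK.trans hQ

end Family


section OrderTools

lemma tlsum_eq_sum {m : ℕ →₀ ℕ} {U : Finset ℕ} (hU : m.support ⊆ U) (t : ℕ) :
    tlsum m t = ∑ j ∈ U.filter (fun j => t ≤ j), m j := by
  unfold tlsum
  rw [Finsupp.sum]
  rw [show (∑ j ∈ m.support, if t ≤ j then m j else 0)
      = ∑ j ∈ U, if t ≤ j then m j else 0 from
    Finset.sum_subset hU (fun j _ hj => by
      rw [Finsupp.notMem_support_iff.mp hj]
      split_ifs <;> rfl)]
  rw [Finset.sum_filter]

lemma tlsum_succ (m : ℕ →₀ ℕ) (t : ℕ) : tlsum m t = m t + tlsum m (t+1) := by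
  have hU : m.support ⊆ insert t m.support := Finset.subset_insert t m.support
  rw [tlsum_eq_sum hU t, tlsum_eq_sum hU (t+1)]
  have h1 : (insert t m.support).filter (fun j => t ≤ j)
      = insert t ((insert t m.support).filter (fun j => t + 1 ≤ j)) := by
    ext j
    simp only [Finset.mem_filter, Finset.mem_insert]
    constructor
    · intro ⟨h2, h3⟩
      rcases eq_or_ne j t with rfl | h4
      · exact Or.inl rfl
      · exact Or.inr ⟨h2, by omega⟩
    · rintro (rfl | ⟨h2, h3⟩)
      · exact ⟨Or.inl rfl, le_rfl⟩
      · exact ⟨h2, by omega⟩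
  rw [h1, Finset.sum_insert (by simp)]

lemma tlsum_congr_above {m m' : ℕ →₀ ℕ} {t : ℕ} (h : ∀ j, t ≤ j → m j = m' j) :
    tlsum m t = tlsum m' t := by
  rw [tlsum_eq_sum (Finset.subset_union_left (s₂ := m'.support)) t,
    tlsum_eq_sum (Finset.subset_union_right (s₁ := m.support)) t]
  apply Finset.sum_congr rfl
  intro j hj
  exact h j (Finset.mem_filter.mp hj).2

lemma exists_top_diff {m m' : ℕ →₀ ℕ} (h : m ≠ m') :
    ∃ k, m k ≠ m' k ∧ ∀ j, k < j → m j = m' j := by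
  set D := (m.support ∪ m'.support).filter (fun j => m j ≠ m' j) with hD
  have hDne : D.Nonempty := by
    have : ∃ j, m j ≠ m' j := by
      by_contra hc
      push_neg at hc
      exact h (Finsupp.ext hc)
    obtain ⟨j, hj⟩ := this
    refine ⟨j, Finset.mem_filter.mpr ⟨?_, hj⟩⟩
    rw [Finset.mem_union]
    by_contra hc
    push_neg at hc
    rw [Finsupp.notMem_support_iff.mp hc.1, Finsupp.notMem_support_iff.mp hc.2] at hj
    exact hj rfl
  refine ⟨D.max' hDne, (Finset.mem_filter.mp (D.max'_mem hDne)).2, ?_⟩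
  intro j hj
  by_contra hc
  have hjD : j ∈ D := by
    refine Finset.mem_filter.mpr ⟨?_, hc⟩
    rw [Finset.mem_union]
    by_contra hc2
    push_neg at hc2
    rw [Finsupp.notMem_support_iff.mp hc2.1, Finsupp.notMem_support_iff.mp hc2.2] at hc
    exact hc rfl
  have := Finset.le_max' D j hjD
  omega

/-- reverse-lexicographic comparison from tail-sum domination -/
lemma revlex_of_tail_dom {m c : ℕ →₀ ℕ} (hne : m ≠ c)
    (hdom : ∀ t, tlsum m t ≤ tlsum c t) :
    ∃ k, m k < c k ∧ ∀ j, k < j → m j = c j := by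
  obtain ⟨k, hk1, hk2⟩ := exists_top_diff hne
  refine ⟨k, ?_, hk2⟩
  have h1 := hdom k
  have h2 : tlsum m (k+1) = tlsum c (k+1) := tlsum_congr_above (fun j hj => hk2 j (by omega))
  have h3 := tlsum_succ m k
  have h4 := tlsum_succ c k
  omega

lemma entry_le_tlsum (m : ℕ →₀ ℕ) (j : ℕ) : m j ≤ tlsum m 0 := by
  have h1 := tlsum_succ m j
  have h2 := tlsum_le_of_le (m := m) (Nat.zero_le j)
  omega

/-- base-`b` digit encoding reading from high indices -/
def mval (b B : ℕ) (m : ℕ →₀ ℕ) : ℕ := ∑ j ∈ Finset.range B, m j * b ^ j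

lemma geom_bound (b k : ℕ) (hb : 1 ≤ b) (f : ℕ → ℕ) (hf : ∀ j, f j ≤ b - 1) :
    ∑ j ∈ Finset.range k, f j * b ^ j ≤ b ^ k - 1 := by
  induction k with
  | zero => simp
  | succ k ih =>
      rw [Finset.sum_range_succ]
      have h1 : f k * b ^ k ≤ (b - 1) * b ^ k := Nat.mul_le_mul_right _ (hf k)
      have h2 : 1 ≤ b ^ k := Nat.one_le_pow _ _ (by omega)
      have h3 : b ^ (k+1) = b * b ^ k := by rw [pow_succ, Nat.mul_comm]
      have h4 : (b - 1) * b ^ k = b * b ^ k - 1 * b ^ k := Nat.sub_mul b 1 (b^k)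
      rw [one_mul] at h4
      have h7 : b ^ k ≤ b * b ^ k := Nat.le_mul_of_pos_left _ (by omega)
      rw [h3]
      omega

lemma mval_lt {b B : ℕ} {m c : ℕ →₀ ℕ} (hb : 1 ≤ b)
    (hm : ∀ j, m j ≤ b - 1) {k : ℕ} (hkB : k < B)
    (hk : m k < c k) (htail : ∀ j, k < j → m j = c j) :
    mval b B m < mval b B c := by
  unfold mval
  rw [Finset.range_eq_Ico, ← Finset.sum_Ico_consecutive _ (Nat.zero_le k) (le_of_lt hkB),
    ← Finset.sum_Ico_consecutive _ (Nat.zero_le k) (le_of_lt hkB),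
    Finset.sum_eq_sum_Ico_succ_bot (by omega : k < B) (fun j => m j * b ^ j),
    Finset.sum_eq_sum_Ico_succ_bot (by omega : k < B) (fun j => c j * b ^ j)]
  have htl : ∑ j ∈ Finset.Ico (k+1) B, m j * b ^ j = ∑ j ∈ Finset.Ico (k+1) B, c j * b ^ j := by
    apply Finset.sum_congr rfl
    intro j hj
    rw [htail j (by exact (Finset.mem_Ico.mp hj).1)]
  have hhead : ∑ j ∈ Finset.Ico 0 k, m j * b ^ j ≤ b ^ k - 1 := by
    rw [← Finset.range_eq_Ico]
    exact geom_bound b k hb _ (fun j => hm j)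
  have hstep : m k * b ^ k + b ^ k ≤ c k * b ^ k := by
    have h5 : (m k + 1) * b ^ k ≤ c k * b ^ k := Nat.mul_le_mul_right _ (by omega)
    have h6 : (m k + 1) * b ^ k = m k * b ^ k + 1 * b ^ k := Nat.add_mul _ _ _
    rw [one_mul] at h6
    omega
  have h2 : 1 ≤ b ^ k := Nat.one_le_pow _ _ (by omega)
  omega

end OrderTools


section Basis

variable {S : Equiv.Perm ℕ → Pol} (hS : IsSchubertFamily S)
include hS

omit hS in
lemma code_tlsum_deg' {w : Equiv.Perm ℕ} (hw : FinSupp w) :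
    tlsum (code w) 0 = len w := by
  rw [tlsum_zero_eq, code_sum_eq_len hw]

theorem lin_indep :
    LinearIndependent ℤ (fun w : {w : Equiv.Perm ℕ // FinSupp w} => S w.1) := by
  rw [linearIndependent_iff']
  intro s g hsum i hi
  by_contra hgi
  set F := s.filter (fun j => g j ≠ 0) with hF
  have hFne : F.Nonempty := ⟨i, Finset.mem_filter.mpr ⟨hi, hgi⟩⟩
  set dmax := F.sup (fun j => len j.1) with hd
  set F' := F.filter (fun j => len j.1 = dmax) with hF'
  have hF'ne : F'.Nonempty := by
    obtain ⟨j0, hj0, hj0max⟩ := Finset.exists_mem_eq_sup F hFne (fun j => len j.1)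
    exact ⟨j0, Finset.mem_filter.mpr ⟨hj0, hj0max.symm⟩⟩
  set B := 1 + F'.sup (fun j => (code j.1).support.sup id) with hB
  set b := dmax + 1 with hbdef
  obtain ⟨w0, hw0F', hw0max⟩ := Finset.exists_mem_eq_sup F' hF'ne (fun j => mval b B (code j.1))
  have hw0F : w0 ∈ F := (Finset.mem_filter.mp hw0F').1
  have hw0s : w0 ∈ s := (Finset.mem_filter.mp hw0F).1
  have hw0g : g w0 ≠ 0 := (Finset.mem_filter.mp hw0F).2
  have hw0len : len w0.1 = dmax := (Finset.mem_filter.mp hw0F').2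
  have hcoeff := congrArg (coeff (code w0.1)) hsum
  rw [coeff_zero] at hcoeff
  rw [MvPolynomial.coeff_sum] at hcoeff
  have hterm : ∀ j ∈ s, j ≠ w0 → coeff (code w0.1) (g j • S j.1) = 0 := by
    intro j hjs hjne
    rw [MvPolynomial.coeff_smul]
    by_cases hgj : g j = 0
    · rw [hgj, zero_smul]
    have hjF : j ∈ F := Finset.mem_filter.mpr ⟨hjs, hgj⟩
    by_cases hcz : coeff (code w0.1) (S j.1) = 0
    · rw [hcz, smul_zero]
    exfalso
    have hmem : code w0.1 ∈ (S j.1).support := MvPolynomial.mem_support_iff.mpr hcz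
    have hdegj : tlsum (code w0.1) 0 = len j.1 :=
      tlsum_zero_of_homog (hS.1 j.1 j.2) hmem
    have hdegw0 : tlsum (code w0.1) 0 = dmax := by
      rw [code_tlsum_deg' w0.2, hw0len]
    have hlenj : len j.1 = dmax := by omega
    have hjF' : j ∈ F' := Finset.mem_filter.mpr ⟨hjF, hlenj⟩
    -- codes distinct
    have hcodene : code w0.1 ≠ code j.1 := by
      intro hc
      exact hjne (Subtype.ext ((code_injective j.2 w0.2 hc.symm)))
    have hdom := (main_tri hS (len j.1) j.1 j.2 rfl).2.1 _ hmem
    obtain ⟨k, hk1, hk2⟩ := revlex_of_tail_dom hcodene hdom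
    -- k is in the support of code j.1, hence k < B
    have hkB : k < B := by
      have : k ∈ (code j.1).support := Finsupp.mem_support_iff.mpr (by omega)
      have h5 : (code j.1).support.sup id ≥ k := Finset.le_sup (f := id) this
      have h6 := Finset.le_sup (f := fun j : {w : Equiv.Perm ℕ // FinSupp w} =>
        (code j.1).support.sup id) hjF'
      omega
    have hentry : ∀ a, (code w0.1) a ≤ b - 1 := by
      intro a
      have := entry_le_tlsum (code w0.1) a
      omega
    have hlt : mval b B (code w0.1) < mval b B (code j.1) :=
      mval_lt (by omega) hentry hkB hk1 hk2
    have hle := Finset.le_sup (f := fun j : {w : Equiv.Perm ℕ // FinSupp w} =>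
      mval b B (code j.1)) hjF'
    rw [hw0max] at hle
    omega
  rw [Finset.sum_eq_single w0 hterm (fun hns => absurd hw0s hns)] at hcoeff
  rw [MvPolynomial.coeff_smul, (main_tri hS (len w0.1) w0.1 w0.2 rfl).1] at hcoeff
  rw [smul_eq_mul, mul_one] at hcoeff
  exact hw0g hcoeff

end Basis


section Span

variable {S : Equiv.Perm ℕ → Pol} (hS : IsSchubertFamily S)

def Vset (S : Equiv.Perm ℕ → Pol) (d : ℕ) : Set Pol :=
  Set.range (fun w : {w : Equiv.Perm ℕ // FinSupp w ∧ ∀ i : ℕ, w (i+1) < w i → i < d} =>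
    S w.1)

include hS

theorem monomial_mem_span (d : ℕ) : ∀ (k N : ℕ) (m : ℕ →₀ ℕ), tlsum m 0 = k →
    (∀ j, d ≤ j → m j = 0) → mval (k+1) d m = N →
    (monomial m (1:ℤ)) ∈ Submodule.span ℤ (Vset S d) := by
  intro k N
  induction N using Nat.strong_induction_on with
  | _ N ih =>
    intro m hdeg hbd hval
    obtain ⟨w, hwfs, hwcode⟩ := code_surjective m
    subst hwcode
    have hdesc : ∀ i, w (i+1) < w i → i < d := by
      intro i hdi
      by_contra hc
      push_neg at hc
      exact (code_pos_of_descent hwfs hdi) (hbd i hc)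
    have hlen : len w = k := by
      have := code_tlsum_deg' hwfs
      omega
    have hSmem : S w ∈ Submodule.span ℤ (Vset S d) :=
      Submodule.subset_span ⟨⟨w, hwfs, hdesc⟩, rfl⟩
    have htri := main_tri hS (len w) w hwfs rfl
    have hc1 : coeff (code w) (S w) = 1 := htri.1
    have hcodemem : code w ∈ (S w).support :=
      MvPolynomial.mem_support_iff.mpr (by rw [hc1]; exact one_ne_zero)
    have hrepr : monomial (code w) (1:ℤ)
        = S w - ∑ m' ∈ (S w).support.erase (code w), monomial m' (coeff m' (S w)) := by
      rw [eq_sub_iff_add_eq]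
      have h0 := MvPolynomial.support_sum_monomial_coeff (S w)
      rw [← Finset.add_sum_erase _ _ hcodemem, hc1] at h0
      exact h0
    rw [hrepr]
    apply Submodule.sub_mem _ hSmem
    apply Submodule.sum_mem
    intro m' hm'
    have hm'supp : m' ∈ (S w).support := Finset.mem_of_mem_erase hm'
    have hm'ne : m' ≠ code w := Finset.ne_of_mem_erase hm'
    have hdom := htri.2.1 m' hm'supp
    have hm'deg : tlsum m' 0 = k := by
      rw [tlsum_zero_of_homog (hS.1 w hwfs) hm'supp, hlen]
    have hm'bd : ∀ j, d ≤ j → m' j = 0 := fun j hj => vbd_S hS hwfs hdesc m' hm'supp j hj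
    obtain ⟨k0, hk0, hk0'⟩ := revlex_of_tail_dom hm'ne hdom
    have hk0d : k0 < d := by
      by_contra hc
      push_neg at hc
      have h7 := hbd k0 hc
      omega
    have hentry : ∀ a, m' a ≤ (k+1) - 1 := fun a => by
      have := entry_le_tlsum m' a
      omega
    have hlt : mval (k+1) d m' < mval (k+1) d (code w) :=
      mval_lt (by omega) hentry hk0d hk0 hk0'
    have hmem' := ih (mval (k+1) d m') (by omega) m' hm'deg hm'bd rfl
    have hsm : monomial m' (coeff m' (S w)) = (coeff m' (S w)) • monomial m' (1:ℤ) := by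
      rw [MvPolynomial.smul_monomial, smul_eq_mul, mul_one]
    rw [hsm]
    exact Submodule.smul_mem _ _ hmem'

theorem span_supported_eq (d : ℕ) :
    Submodule.span ℤ (Vset S d)
      = Subalgebra.toSubmodule (supported ℤ (Set.Iio d)) := by
  apply le_antisymm
  · rw [Submodule.span_le]
    rintro p ⟨w, rfl⟩
    show S w.1 ∈ supported ℤ (Set.Iio d)
    rw [mem_supported]
    intro i hi
    obtain ⟨m, hm, him⟩ := (MvPolynomial.mem_vars i).mp hi
    rw [Set.mem_Iio]
    by_contra hc
    push_neg at hc
    exact (Finsupp.mem_support_iff.mp him) (vbd_S hS w.2.1 w.2.2 m hm i hc)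
  · intro p hp
    rw [Subalgebra.mem_toSubmodule, mem_supported] at hp
    rw [← MvPolynomial.support_sum_monomial_coeff p]
    apply Submodule.sum_mem
    intro m hm
    have hbd : ∀ j, d ≤ j → m j = 0 := by
      intro j hj
      by_contra hc
      have h1 : j ∈ p.vars := (MvPolynomial.mem_vars j).mpr
        ⟨m, hm, Finsupp.mem_support_iff.mpr hc⟩
      have h2 := hp h1
      rw [Set.mem_Iio] at h2
      omega
    have hmem := monomial_mem_span hS d (tlsum m 0) (mval (tlsum m 0 + 1) d m) m rfl hbd rfl
    have hsm : monomial m (coeff m p) = (coeff m p) • monomial m (1:ℤ) := by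
      rw [MvPolynomial.smul_monomial, smul_eq_mul, mul_one]
    rw [hsm]
    exact Submodule.smul_mem _ _ hmem

theorem span_top :
    Submodule.span ℤ (Set.range (fun w : {w : Equiv.Perm ℕ // FinSupp w} => S w.1)) = ⊤ := by
  rw [eq_top_iff]
  intro p _
  set d := (p.vars.sup id) + 1 with hd
  have hp : p ∈ supported ℤ (Set.Iio d) := by
    rw [mem_supported]
    intro i hi
    rw [Set.mem_Iio]
    have := Finset.le_sup (f := id) hi
    simp only [id] at this
    omega
  have h1 : p ∈ Submodule.span ℤ (Vset S d) := by
    rw [span_supported_eq hS d]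
    exact hp
  refine Submodule.span_mono ?_ h1
  rintro q ⟨w, rfl⟩
  exact ⟨⟨w.1, w.2.1⟩, rfl⟩

end Span


end SchubertDev


/-- Schubert polynomials form a ℤ-basis of `Pol`, and those with descent
set contained in `{1,…,d}` (paper indexing) form a ℤ-basis of `ℤ[x₁,…,x_d]`. -/
theorem stmt_5 (S : Equiv.Perm ℕ → Pol) (hS : IsSchubertFamily S) :
    (LinearIndependent ℤ (fun w : {w : Equiv.Perm ℕ // FinSupp w} => S w.1) ∧
      Submodule.span ℤ (Set.range (fun w : {w : Equiv.Perm ℕ // FinSupp w} => S w.1)) = ⊤) ∧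
    ∀ d : ℕ,
      LinearIndependent ℤ
        (fun w : {w : Equiv.Perm ℕ // FinSupp w ∧ ∀ i : ℕ, w (i+1) < w i → i < d} =>
          S w.1) ∧
      Submodule.span ℤ
        (Set.range (fun w : {w : Equiv.Perm ℕ // FinSupp w ∧ ∀ i : ℕ, w (i+1) < w i → i < d} =>
          S w.1)) =
      Subalgebra.toSubmodule (supported ℤ (Set.Iio d)) := by
  refine ⟨⟨lin_indep hS, span_top hS⟩, ?_⟩
  intro d
  constructor
  · exact (lin_indep hS).comp
      (fun w : {w : Equiv.Perm ℕ // FinSupp w ∧ ∀ i : ℕ, w (i+1) < w i → i < d} =>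
        (⟨w.1, w.2.1⟩ : {w : Equiv.Perm ℕ // FinSupp w}))
      (fun a b hab => by
        have h2 : (⟨a.1, a.2.1⟩ : {w : Equiv.Perm ℕ // FinSupp w}) = ⟨b.1, b.2.1⟩ := hab
        have h3 : a.1 = b.1 := congrArg (fun x : {w : Equiv.Perm ℕ // FinSupp w} => x.1) h2
        exact Subtype.ext h3)
  · exact span_supported_eq hS d
end

section
/- Fix an integer m ≥ 1. For every i ≥ 1 and f ∈ Poly, the polynomial (R_{i+1}^m − R_i^m)f is divisible by x_i, so the m-quasisymmetric divided difference T_i^{(m)} f = ((R_{i+1}^m − R_i^m)f)/x_i is well defined; and for every f ∈ Poly⁺ the finitely supported sum Σ_{i≥1} Z^{(m)}(x_i·T_i^{(m)} f) equals f, i.e. the operators Z^{(m)}∘x_i are creation operators for the T_i^{(m)}. -/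
/-
Conventions: `Pol = MvPolynomial ℕ ℤ` with the Lean variable `X i` representing
the paper's variable `x_{i+1}` (0-indexed).  All operators carrying a paper index
`i ≥ 1` are represented by Lean operators indexed by `i : ℕ` (Lean `i` ↔ paper `i+1`),
and sequences of positive integers are represented by sequences of natural numbers
(entry `v` ↔ paper entry `v+1`).
-/

open MvPolynomial
open scoped Classical

-- auxiliary lemmas for stmt_7
section Aux

open Finset

/-- The single substitution describing `BSit i m`. -/
noncomputable def substF (i m : ℕ) : ℕ → Pol :=
  fun j => if j < i then X j else if j < i + m then 0 else X (j - m)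

lemma BS_X (i j : ℕ) :
    BS i (X j) = if j < i then X j else if j = i then 0 else X (j-1) := by
  simp [BS, aeval_X]

lemma BSit_eq (i m : ℕ) (f : Pol) : BSit i m f = aeval (substF i m) f := by
  induction m with
  | zero =>
      have h : substF i 0 = X := by
        funext j; simp only [substF, Nat.add_zero, Nat.sub_zero]
        split <;> rfl
      simp [BSit, h, aeval_X_left_apply]
  | succ m ih =>
      have h1 : BSit i (m+1) f = BS i (BSit i m f) := by
        simp [BSit, Function.iterate_succ_apply']
      rw [h1, ih, ← AlgHom.comp_apply, MvPolynomial.comp_aeval]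
      have hfun : (fun j => BS i (substF i m j)) = substF i (m+1) := by
        funext j
        by_cases hj1 : j < i
        · have l : substF i m j = X j := by simp only [substF]; rw [if_pos hj1]
          have r : substF i (m+1) j = X j := by simp only [substF]; rw [if_pos hj1]
          rw [l, r, BS_X, if_pos hj1]
        · by_cases hj2 : j < i + m
          · have l : substF i m j = 0 := by
              simp only [substF]; rw [if_neg hj1, if_pos hj2]
            have r : substF i (m+1) j = 0 := by
              simp only [substF]; rw [if_neg hj1, if_pos (by omega)]
            rw [l, r, map_zero]
          · have l : substF i m j = X (j - m) := by
              simp only [substF]; rw [if_neg hj1, if_neg hj2]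
            rw [l, BS_X]
            by_cases hj4 : j = i + m
            · have r : substF i (m+1) j = 0 := by
                simp only [substF]; rw [if_neg hj1, if_pos (by omega)]
              rw [r, if_neg (by omega), if_pos (by omega)]
            · have r : substF i (m+1) j = X (j - (m+1)) := by
                simp only [substF]; rw [if_neg hj1, if_neg (by omega)]
              rw [r, if_neg (by omega), if_neg (by omega)]
              congr 1
      rw [hfun]

lemma BSit_sub (i m : ℕ) (f g : Pol) :
    BSit i m (f - g) = BSit i m f - BSit i m g := by
  simp [BSit_eq, map_sub]

lemma BSit_zero_poly (i m : ℕ) : BSit i m (0 : Pol) = 0 := by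
  simp [BSit_eq]

lemma aeval_dvd_sub (d : Pol) (g h : ℕ → Pol) (H : ∀ j, d ∣ g j - h j) (f : Pol) :
    d ∣ aeval g f - aeval h f := by
  induction f using MvPolynomial.induction_on with
  | C a => simp
  | add p q hp hq =>
      have : aeval g (p + q) - aeval h (p + q)
          = (aeval g p - aeval h p) + (aeval g q - aeval h q) := by
        simp [map_add]; ring
      rw [this]; exact dvd_add hp hq
  | mul_X p n hp =>
      have : aeval g (p * X n) - aeval h (p * X n)
          = aeval g p * (g n - h n) + (aeval g p - aeval h p) * h n := by
        simp [map_mul, aeval_X]; ring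
      rw [this]
      exact dvd_add (Dvd.dvd.mul_left (H n) _) (Dvd.dvd.mul_right hp _)

lemma key_dvd (m : ℕ) (hm : 1 ≤ m) (i : ℕ) (f : Pol) :
    X i ∣ (BSit (i+1) m f - BSit i m f) := by
  rw [BSit_eq, BSit_eq]
  apply aeval_dvd_sub
  intro j
  by_cases h1 : j < i
  · have h2 : j < i + 1 := by omega
    simp [substF, h1, h2]
  · by_cases h2 : j = i
    · subst h2
      have h3 : j < j + 1 := by omega
      have h4 : ¬ j < j := lt_irrefl j
      have h5 : j < j + m := by omega
      simp [substF, h3, h4, h5]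
    · by_cases h3 : j < i + m
      · have h4 : ¬ j < i + 1 := by omega
        have h5 : j < i + 1 + m := by omega
        have h6 : ¬ j < i := by omega
        simp [substF, h4, h5, h6, h3]
      · by_cases h4 : j = i + m
        · subst h4
          have h5 : ¬ i + m < i + 1 := by omega
          have h6 : i + m < i + 1 + m := by omega
          have h7 : ¬ i + m < i := by omega
          have h8 : ¬ i + m < i + m := lt_irrefl _
          simp only [substF, h5, if_false, h6, if_true, h7, h8, zero_sub,
            Nat.add_sub_cancel, if_false]
          exact (dvd_neg).2 dvd_rfl
        · have h5 : ¬ j < i + 1 := by omega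
          have h6 : ¬ j < i + 1 + m := by omega
          have h7 : ¬ j < i := by omega
          simp [substF, h5, h6, h7, h3]

lemma exactDiv_spec (d f : Pol) (h : d ∣ f) : d * exactDiv d f = f := by
  obtain ⟨c, hc⟩ := h
  have hex : ∃ g : Pol, d * g = f := ⟨c, hc.symm⟩
  rw [exactDiv, dif_pos hex]
  exact hex.choose_spec

lemma comm2 (n i m : ℕ) (hin : i ≤ n) (f : Pol) :
    BSit 0 n (BSit i m f) = BSit 0 (n + m) f := by
  rw [BSit_eq, BSit_eq, ← AlgHom.comp_apply, MvPolynomial.comp_aeval, BSit_eq]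
  have hfun : (fun j => aeval (substF 0 n) (substF i m j)) = substF 0 (n + m) := by
    have e0 : ∀ t, substF 0 n t = if t < n then 0 else X (t - n) := by
      intro t
      simp only [substF]
      rw [if_neg (Nat.not_lt_zero t), Nat.zero_add]
    funext j
    by_cases h1 : j < i
    · have l : substF i m j = X j := by simp only [substF]; rw [if_pos h1]
      have r : substF 0 (n+m) j = 0 := by
        simp only [substF]; rw [if_neg (Nat.not_lt_zero j), if_pos (by omega)]
      rw [l, r, aeval_X, e0, if_pos (by omega)]
    · by_cases h2 : j < i + m
      · have l : substF i m j = 0 := by simp only [substF]; rw [if_neg h1, if_pos h2]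
        have r : substF 0 (n+m) j = 0 := by
          simp only [substF]; rw [if_neg (Nat.not_lt_zero j), if_pos (by omega)]
        rw [l, r, map_zero]
      · have l : substF i m j = X (j - m) := by
          simp only [substF]; rw [if_neg h1, if_neg h2]
        rw [l, aeval_X, e0]
        by_cases h4 : j < n + m
        · have r : substF 0 (n+m) j = 0 := by
            simp only [substF]; rw [if_neg (Nat.not_lt_zero j), if_pos (by omega)]
          rw [r, if_pos (by omega)]
        · have r : substF 0 (n+m) j = X (j - (n+m)) := by
            simp only [substF]; rw [if_neg (Nat.not_lt_zero j), if_neg (by omega)]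
          rw [r, if_neg (by omega)]
          congr 1
          omega
  rw [hfun]

lemma BSit_add_exp (a b : ℕ) (f : Pol) :
    BSit 0 a (BSit 0 b f) = BSit 0 (a + b) f := by
  simp [BSit, ← Function.iterate_add_apply]

lemma BSit_id_of_vars (i m : ℕ) (f : Pol) (hv : ∀ j ∈ f.vars, j < i) :
    BSit i m f = f := by
  rw [BSit_eq]
  have : aeval (substF i m) f = aeval X f := by
    rw [aeval_def, aeval_def]
    apply eval₂Hom_congr' rfl _ rfl
    intro j hj _
    have := hv j hj
    simp [substF, this]
  rw [this, aeval_X_left_apply]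

lemma BSit_zero_of_vars (n : ℕ) (f : Pol) (h0 : constantCoeff f = 0)
    (hv : ∀ j ∈ f.vars, j < n) : BSit 0 n f = 0 := by
  rw [BSit_eq]
  have : aeval (substF 0 n) f = aeval (fun _ => (0 : Pol)) f := by
    rw [aeval_def, aeval_def]
    apply eval₂Hom_congr' rfl _ rfl
    intro j hj _
    have h1 := hv j hj
    have h2 : ¬ j < 0 := by omega
    simp only [substF]
    rw [if_neg h2, if_pos (by omega)]
  rw [this, aeval_zero', h0, map_zero]

end Aux

private theorem stmt_7_aux (m : ℕ) (hm : 1 ≤ m) :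
    (∀ (i : ℕ) (f : Pol), X i ∣ (BSit (i+1) m f - BSit i m f)) ∧
    ∀ f : Pol, constantCoeff f = 0 →
      {i : ℕ | Zm m (X i * Tm m i f) ≠ 0}.Finite ∧
      ∑ᶠ i : ℕ, Zm m (X i * Tm m i f) = f := by
  refine ⟨key_dvd m hm, fun f hf => ?_⟩
  set N := f.vars.sup id + 1 with hN
  have hvars : ∀ j ∈ f.vars, j < N := by
    intro j hj
    have : id j ≤ f.vars.sup id := Finset.le_sup hj
    simpa [hN] using Nat.lt_succ_of_le this
  have hXT : ∀ i, X i * Tm m i f = BSit (i+1) m f - BSit i m f := fun i =>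
    exactDiv_spec _ _ (key_dvd m hm i f)
  -- vanishing of summand for i ≥ N
  have hgN : ∀ i, N ≤ i → X i * Tm m i f = 0 := by
    intro i hi
    rw [hXT, BSit_id_of_vars _ _ _ (fun j hj => lt_of_lt_of_le (hvars j hj) (by omega)),
      BSit_id_of_vars _ _ _ (fun j hj => lt_of_lt_of_le (hvars j hj) hi), sub_self]
  have hZzero : ∀ i, N ≤ i → Zm m (X i * Tm m i f) = 0 := by
    intro i hi
    rw [hgN i hi, Zm]
    have : ∀ k : ℕ, BSit 0 (k * m) (0 : Pol) = 0 := fun k => BSit_zero_poly _ _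
    simp [this]
  constructor
  · apply (Finset.range N).finite_toSet.subset
    intro i hi
    simp only [Set.mem_setOf_eq] at hi
    simp only [Finset.coe_range, Set.mem_Iio]
    by_contra h
    exact hi (hZzero i (by omega))
  · -- the main computation
    have hsum1 : ∑ᶠ i : ℕ, Zm m (X i * Tm m i f)
        = ∑ i ∈ Finset.range N, Zm m (X i * Tm m i f) := by
      apply finsum_eq_sum_of_support_subset
      intro i hi
      simp only [Function.mem_support] at hi
      simp only [Finset.coe_range, Set.mem_Iio]
      by_contra h
      exact hi (hZzero i (by omega))
    have hZval : ∀ i, i < N → Zm m (X i * Tm m i f)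
        = ∑ k ∈ Finset.range (2*N),
            (BSit 0 (k*m) (BSit (i+1) m f) - BSit 0 (k*m) (BSit i m f)) := by
      intro i hiN
      rw [Zm]
      have hrw : ∀ k : ℕ, BSit 0 (k*m) (X i * Tm m i f)
          = BSit 0 (k*m) (BSit (i+1) m f) - BSit 0 (k*m) (BSit i m f) := by
        intro k
        rw [hXT, BSit_sub]
      have hsupp : (Function.support fun k => BSit 0 (k*m) (X i * Tm m i f))
          ⊆ ↑(Finset.range (2*N)) := by
        intro k hk
        simp only [Function.mem_support] at hk
        simp only [Finset.coe_range, Set.mem_Iio]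
        by_contra h
        push_neg at h
        have hk1 : i + 1 ≤ k * m := by
          have : k ≤ k * m := Nat.le_mul_of_pos_right k (by omega)
          omega
        apply hk
        rw [hrw k, comm2 _ _ _ (by omega), comm2 _ _ _ (by omega), sub_self]
      rw [finsum_eq_sum_of_support_subset _ hsupp]
      exact Finset.sum_congr rfl fun k _ => hrw k
    rw [hsum1]
    have : ∑ i ∈ Finset.range N, Zm m (X i * Tm m i f)
        = ∑ k ∈ Finset.range (2*N), ∑ i ∈ Finset.range N,
            (BSit 0 (k*m) (BSit (i+1) m f) - BSit 0 (k*m) (BSit i m f)) := by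
      rw [← Finset.sum_comm]
      exact Finset.sum_congr rfl fun i hi => hZval i (Finset.mem_range.mp hi)
    rw [this]
    have htel1 : ∀ k : ℕ, ∑ i ∈ Finset.range N,
        (BSit 0 (k*m) (BSit (i+1) m f) - BSit 0 (k*m) (BSit i m f))
        = BSit 0 (k*m) f - BSit 0 ((k+1)*m) f := by
      intro k
      rw [Finset.sum_range_sub (fun j => BSit 0 (k*m) (BSit j m f))]
      congr 1
      · congr 1
        exact BSit_id_of_vars _ _ _ hvars
      · rw [BSit_add_exp, Nat.succ_mul, Nat.add_comm]
    have hs : ∑ k ∈ Finset.range (2*N), ∑ i ∈ Finset.range N,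
        (BSit 0 (k*m) (BSit (i+1) m f) - BSit 0 (k*m) (BSit i m f))
        = ∑ k ∈ Finset.range (2*N), (BSit 0 (k*m) f - BSit 0 ((k+1)*m) f) :=
      Finset.sum_congr rfl fun k _ => htel1 k
    rw [hs]
    rw [Finset.sum_range_sub' (fun k => BSit 0 (k*m) f) (2*N)]
    have h0 : BSit 0 (0*m) f = f := by
      simp [BSit]
    have hbig : BSit 0 (2*N*m) f = 0 := by
      apply BSit_zero_of_vars _ _ hf
      intro j hj
      have h1 := hvars j hj
      have : N ≤ 2*N*m := by nlinarith
      omega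
    rw [h0, hbig, sub_zero]


/-- `(R_{i+1}^m − R_i^m)f` is divisible by `x_i` (so `T_i^{(m)}` is well
defined), and the `Z^{(m)}∘x_i` are creation operators for the `T_i^{(m)}`. -/
theorem stmt_7 (m : ℕ) (hm : 1 ≤ m) :
    (∀ (i : ℕ) (f : Pol), X i ∣ (BSit (i+1) m f - BSit i m f)) ∧
    ∀ f : Pol, constantCoeff f = 0 →
      {i : ℕ | Zm m (X i * Tm m i f) ≠ 0}.Finite ∧
      ∑ᶠ i : ℕ, Zm m (X i * Tm m i f) = f :=
  stmt_7_aux m hm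
end

section
/- The slide polynomials {𝔉_b : b a weakly increasing (possibly empty) sequence of positive integers} form a ℤ-basis of Poly = ℤ[x₁,x₂,…]; moreover, for each d ≥ 0, the subfamily {𝔉_b : b weakly increasing with all entries ≤ d} is a ℤ-basis of the subring ℤ[x₁,…,x_d]. -/
/-
Conventions: `Pol = MvPolynomial ℕ ℤ` with the Lean variable `X i` representing
the paper's variable `x_{i+1}` (0-indexed).  All operators carrying a paper index
`i ≥ 1` are represented by Lean operators indexed by `i : ℕ` (Lean `i` ↔ paper `i+1`),
and sequences of positive integers are represented by sequences of natural numbers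
(entry `v` ↔ paper entry `v+1`).
-/

open MvPolynomial
open scoped Classical

noncomputable section SlideBasis

-- auxiliary
def cnt {k : ℕ} (b : Fin k → ℕ) : ℕ →₀ ℕ := Multiset.toFinsupp (↑(List.ofFn b))

lemma list_prod_X (l : List ℕ) :
    ((l.map X).prod : Pol) = monomial (Multiset.toFinsupp (↑l)) 1 := by
  induction l with
  | nil => simp
  | cons t l ih =>
      simp only [List.map_cons, List.prod_cons, ih]
      rw [X, monomial_mul]
      congr 1
      · rw [show ((↑(t :: l) : Multiset ℕ)) = {t} + ↑l by rfl]
        rw [map_add, Multiset.toFinsupp_singleton]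

lemma prod_X_eq {k : ℕ} (b : Fin k → ℕ) :
    (∏ j, X (b j) : Pol) = monomial (cnt b) 1 := by
  rw [← List.prod_ofFn, show (fun j => (X (b j) : Pol)) = X ∘ b from rfl,
    ← List.map_ofFn (f := b) (g := X), list_prod_X]; rfl

lemma cnt_inj {k k' : ℕ} {a : Fin k → ℕ} {b : Fin k' → ℕ} (ha : Monotone a) (hb : Monotone b)
    (h : cnt a = cnt b) : List.ofFn a = List.ofFn b := by
  have h2 := congrArg Finsupp.toMultiset h
  rw [cnt, cnt, Multiset.toFinsupp_toMultiset, Multiset.toFinsupp_toMultiset] at h2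
  exact List.Perm.eq_of_sortedLE (List.sortedLE_ofFn_iff.mpr ha) (List.sortedLE_ofFn_iff.mpr hb) (Quotient.exact h2)

lemma sigma_eq {k k' : ℕ} {a : Fin k → ℕ} {b : Fin k' → ℕ} (h : List.ofFn a = List.ofFn b)
    {P : ∀ {n : ℕ}, (Fin n → ℕ) → Prop} (ha : P a) (hb : P b) :
    (⟨k, ⟨a, ha⟩⟩ : Σ n : ℕ, {c : Fin n → ℕ // P c}) = ⟨k', ⟨b, hb⟩⟩ := by
  have hk : k = k' := by simpa using congrArg List.length h
  subst hk
  have hab : a = b := List.ofFn_injective h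
  subst hab
  rfl

lemma compat_finite {k : ℕ} (a : Fin k → ℕ) : {b : Fin k → ℕ | Compat a b}.Finite := by
  apply Set.Finite.subset (Set.Finite.pi (fun j : Fin k => Set.finite_Iic (a j)))
  intro b hb j _
  exact hb.2.1 j

def compatF {k : ℕ} (a : Fin k → ℕ) : Finset (Fin k → ℕ) := (compat_finite a).toFinset

lemma mem_compatF {k : ℕ} {a b : Fin k → ℕ} : b ∈ compatF a ↔ Compat a b :=
  (compat_finite a).mem_toFinset

lemma slide_eq {k : ℕ} (a : Fin k → ℕ) :
    slide a = ∑ b ∈ compatF a, monomial (cnt b) 1 := by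
  rw [slide, ← Set.Finite.coe_toFinset (compat_finite a), finsum_mem_coe_finset]
  exact Finset.sum_congr rfl fun b _ => prod_X_eq b

lemma compat_self {k : ℕ} {a : Fin k → ℕ} (ha : Monotone a) : Compat a a :=
  ⟨ha, fun _ => le_rfl, fun _ _ h => h⟩

lemma coeff_slide {k : ℕ} (a : Fin k → ℕ) (e : ℕ →₀ ℕ) :
    coeff e (slide a) = ∑ b ∈ compatF a, if cnt b = e then 1 else 0 := by
  rw [slide_eq]
  rw [MvPolynomial.coeff_sum]
  exact Finset.sum_congr rfl fun b _ => by rw [coeff_monomial]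

lemma coeff_slide_self {k : ℕ} {a : Fin k → ℕ} (ha : Monotone a) :
    coeff (cnt a) (slide a) = 1 := by
  rw [coeff_slide, Finset.sum_eq_single a]
  · simp
  · intro b hb hba
    rw [if_neg]
    intro h
    exact hba (List.ofFn_injective (cnt_inj (mem_compatF.mp hb).1 ha h))
  · intro h
    exact absurd (mem_compatF.mpr (compat_self ha)) h

lemma coeff_slide_ne {k : ℕ} (a : Fin k → ℕ) (e : ℕ →₀ ℕ) (h : coeff e (slide a) ≠ 0) :
    ∃ b, Compat a b ∧ cnt b = e := by
  by_contra hc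
  push_neg at hc
  apply h
  rw [coeff_slide]
  exact Finset.sum_eq_zero fun b hb => if_neg (hc b (mem_compatF.mp hb))

def mu (d : ℕ →₀ ℕ) : ℕ := (Finsupp.toMultiset d).sum

lemma mu_cnt {k : ℕ} (b : Fin k → ℕ) : mu (cnt b) = ∑ j, b j := by
  rw [mu, cnt, Multiset.toFinsupp_toMultiset]
  simpa using List.sum_ofFn (f := b)

lemma mu_lt {k : ℕ} {a b : Fin k → ℕ} (hle : ∀ j, b j ≤ a j) (hne : b ≠ a) :
    mu (cnt b) < mu (cnt a) := by
  rw [mu_cnt, mu_cnt]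
  obtain ⟨j, hj⟩ := Function.ne_iff.mp hne
  exact Finset.sum_lt_sum (fun i _ => hle i) ⟨j, Finset.mem_univ j, lt_of_le_of_ne (hle j) hj⟩

lemma mem_cnt_support {k : ℕ} {b : Fin k → ℕ} {t : ℕ} (ht : t ∈ (cnt b).support) :
    ∃ j, b j = t := by
  rw [cnt, Finsupp.mem_support_iff, Multiset.toFinsupp_apply] at ht
  have : t ∈ List.ofFn b := by
    rw [← Multiset.mem_coe]
    exact Multiset.count_pos.mp (Nat.pos_of_ne_zero ht)
  rw [List.mem_ofFn] at this
  exact this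

lemma exists_monotone (d : ℕ →₀ ℕ) :
    ∃ (k : ℕ) (a : Fin k → ℕ), Monotone a ∧ cnt a = d ∧ ∀ j, a j ∈ d.support := by
  classical
  set l := Multiset.sort (Finsupp.toMultiset d) (· ≤ ·) with hl
  refine ⟨l.length, l.get, ?_, ?_, ?_⟩
  · rw [← List.sortedLE_ofFn_iff, List.ofFn_get]
    exact List.sortedLE_iff_pairwise.mpr (Multiset.pairwise_sort _ _)
  · rw [cnt, List.ofFn_get, hl, Multiset.sort_eq, Finsupp.toMultiset_toFinsupp]
  · intro j
    rw [← Finsupp.mem_toMultiset, ← Multiset.sort_eq (Finsupp.toMultiset d) (· ≤ ·), ← hl,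
      Multiset.mem_coe]
    exact l.get_mem j

lemma monomial_mem_span_s9 (M : Submodule ℤ Pol) (s : Set ℕ)
    (hdc : ∀ x y : ℕ, y ≤ x → x ∈ s → y ∈ s)
    (hM : ∀ (k : ℕ) (a : Fin k → ℕ), Monotone a → (∀ j, a j ∈ s) → slide a ∈ M) :
    ∀ (d : ℕ →₀ ℕ), (∀ t ∈ d.support, t ∈ s) → (monomial d 1 : Pol) ∈ M := by
  have H : ∀ n (d : ℕ →₀ ℕ), mu d = n → (∀ t ∈ d.support, t ∈ s) →
      (monomial d 1 : Pol) ∈ M := by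
    intro n
    induction n using Nat.strong_induction_on with
    | _ n ih =>
      intro d hmu hd
      obtain ⟨k, a, hmono, hcnt, hmem⟩ := exists_monotone d
      have hs : ∀ j, a j ∈ s := fun j => hd _ (hmem j)
      have key : (monomial d 1 : Pol)
          = slide a - ∑ b ∈ (compatF a).erase a, monomial (cnt b) 1 := by
        rw [slide_eq, ← Finset.add_sum_erase _ _ (mem_compatF.mpr (compat_self hmono)), hcnt]
        ring
      rw [key]
      refine sub_mem (hM k a hmono hs) (Submodule.sum_mem _ fun b hb => ?_)
      have hcb : Compat a b := mem_compatF.mp (Finset.mem_of_mem_erase hb)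
      have hne : b ≠ a := Finset.ne_of_mem_erase hb
      have hlt : mu (cnt b) < n := by
        rw [← hmu, ← hcnt]; exact mu_lt hcb.2.1 hne
      refine ih _ hlt (cnt b) rfl fun t ht => ?_
      obtain ⟨j, rfl⟩ := mem_cnt_support ht
      exact hdc (a j) (b j) (hcb.2.1 j) (hs j)
  exact fun d => H (mu d) d rfl

lemma slide_li {P : ∀ {n : ℕ}, (Fin n → ℕ) → Prop}
    (hP : ∀ {n : ℕ} (a : Fin n → ℕ), P a → Monotone a) :
    LinearIndependent ℤ (fun p : Σ k : ℕ, {a : Fin k → ℕ // P a} => slide p.2.1) := by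
  rw [linearIndependent_iff']
  suffices H : ∀ t : Finset (Σ k : ℕ, {a : Fin k → ℕ // P a}), ∀ g : (Σ k : ℕ, {a : Fin k → ℕ // P a}) → ℤ,
      ∑ i ∈ t, g i • slide i.2.1 = 0 → ∀ i ∈ t, g i = 0 from H
  intro t
  induction t using Finset.strongInductionOn with
  | _ t ih =>
    intro g hsum i hi
    obtain ⟨p, hp, hmax⟩ := t.exists_max_image (fun q => mu (cnt q.2.1)) ⟨i, hi⟩
    have hgp : g p = 0 := by
      have h0 := congrArg (coeff (cnt p.2.1)) hsum
      rw [coeff_zero, MvPolynomial.coeff_sum] at h0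
      rw [Finset.sum_eq_single p] at h0
      · rw [MvPolynomial.coeff_smul, coeff_slide_self (hP _ p.2.2)] at h0
        simpa using h0
      · intro q hq hqp
        rw [MvPolynomial.coeff_smul]
        rcases eq_or_ne (coeff (cnt p.2.1) (slide q.2.1)) 0 with h | h
        · rw [h, smul_zero]
        · exfalso
          obtain ⟨b, hcb, hcnte⟩ := coeff_slide_ne _ _ h
          by_cases hba : b = q.2.1
          · subst hba
            exact hqp (sigma_eq (cnt_inj (hP _ q.2.2) (hP _ p.2.2) hcnte) q.2.2 p.2.2)
          · have hlt := mu_lt hcb.2.1 hba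
            rw [hcnte] at hlt
            exact absurd (hmax q hq) (not_le.mpr hlt)
      · intro hp'
        exact absurd hp hp'
    by_cases hip : i = p
    · rw [hip]; exact hgp
    · refine ih (t.erase p) (Finset.erase_ssubset hp) g ?_ i (Finset.mem_erase.mpr ⟨hip, hi⟩)
      rw [← Finset.add_sum_erase _ _ hp, hgp, zero_smul, zero_add] at hsum
      exact hsum

end SlideBasis

/-- slide polynomials (indexed by weakly increasing sequences) are a
ℤ-basis of `Pol`, and those with all entries at most `d` (paper indexing) are a
ℤ-basis of `ℤ[x₁,…,x_d]`. -/
theorem stmt_9 :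
    (LinearIndependent ℤ
        (fun p : Σ k : ℕ, {a : Fin k → ℕ // Monotone a} => slide p.2.1) ∧
      Submodule.span ℤ
        (Set.range (fun p : Σ k : ℕ, {a : Fin k → ℕ // Monotone a} => slide p.2.1)) = ⊤) ∧
    ∀ d : ℕ,
      LinearIndependent ℤ
        (fun p : Σ k : ℕ, {a : Fin k → ℕ // Monotone a ∧ ∀ j, a j < d} => slide p.2.1) ∧
      Submodule.span ℤ
        (Set.range
          (fun p : Σ k : ℕ, {a : Fin k → ℕ // Monotone a ∧ ∀ j, a j < d} => slide p.2.1)) =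
      Subalgebra.toSubmodule (supported ℤ (Set.Iio d)) := by
  classical
  constructor
  · constructor
    · exact slide_li (P := fun {n} a => Monotone a) (fun a ha => ha)
    · rw [Submodule.eq_top_iff']
      intro f
      rw [f.as_sum]
      refine Submodule.sum_mem _ fun d _ => ?_
      have h1 : (monomial d 1 : Pol) ∈ Submodule.span ℤ
          (Set.range (fun p : Σ k : ℕ, {a : Fin k → ℕ // Monotone a} => slide p.2.1)) :=
        monomial_mem_span_s9 (Submodule.span ℤ
            (Set.range (fun p : Σ k : ℕ, {a : Fin k → ℕ // Monotone a} => slide p.2.1)))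
          Set.univ (fun _ _ _ _ => trivial)
          (fun k a hm _ => Submodule.subset_span ⟨⟨k, ⟨a, hm⟩⟩, rfl⟩) d (fun _ _ => trivial)
      have h2 : (monomial d (coeff d f) : Pol) = (coeff d f) • monomial d 1 := by
        rw [← (monomial d).map_smul, smul_eq_mul, mul_one]
      rw [h2]
      exact Submodule.smul_mem _ _ h1
  · intro dd
    constructor
    · exact slide_li (P := fun {n} a => Monotone a ∧ ∀ j, a j < dd) (fun a ha => ha.1)
    · apply le_antisymm
      · rw [Submodule.span_le]
        rintro _ ⟨⟨k, a, hm, hlt⟩, rfl⟩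
        simp only [SetLike.mem_coe, Subalgebra.mem_toSubmodule]
        rw [mem_supported]
        intro t ht
        rw [Finset.mem_coe, mem_vars] at ht
        obtain ⟨e, he, hte⟩ := ht
        obtain ⟨b, hcb, rfl⟩ := coeff_slide_ne a e (mem_support_iff.mp he)
        obtain ⟨j, rfl⟩ := mem_cnt_support hte
        exact lt_of_le_of_lt (hcb.2.1 j) (hlt j)
      · intro f hf
        rw [Subalgebra.mem_toSubmodule, mem_supported] at hf
        rw [f.as_sum]
        refine Submodule.sum_mem _ fun d hd => ?_
        have h1 : (monomial d 1 : Pol) ∈ Submodule.span ℤ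
            (Set.range (fun p : Σ k : ℕ,
              {a : Fin k → ℕ // Monotone a ∧ ∀ j, a j < dd} => slide p.2.1)) := by
          refine monomial_mem_span_s9 (Submodule.span ℤ
              (Set.range (fun p : Σ k : ℕ,
                {a : Fin k → ℕ // Monotone a ∧ ∀ j, a j < dd} => slide p.2.1))) (Set.Iio dd)
            (fun x y hyx hx => lt_of_le_of_lt hyx hx)
            (fun k a hm hj => Submodule.subset_span ⟨⟨k, ⟨a, hm, hj⟩⟩, rfl⟩) d
            (fun t ht => ?_)
          exact hf (Finset.mem_coe.mpr (mem_vars t |>.mpr ⟨d, hd, ht⟩))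
        have h2 : (monomial d (coeff d f) : Pol) = (coeff d f) • monomial d 1 := by
          rw [← (monomial d).map_smul, smul_eq_mul, mul_one]
        rw [h2]
        exact Submodule.smul_mem _ _ h1
end
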